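/- arXiv:2101.02238 — 5 statements merged into one kernel-verified Lean document; each statement's English description precedes it below -/
import Mathlib

section
/- Suppose c : 𝒯 → ℝ is continuously differentiable with c(0) = 0, v : 𝒯 → (0,∞) is continuous, z(t) := ∫₀ᵗ v(s) ds, f : 𝒯 × ℝ → [0,∞) is jointly integrable, and Φ : 𝒯 × ℝ → ℝ is continuously differentiable and satisfies, for all t ∈ 𝒯 and x ∈ ℝ, c(t)·∂ₜΦ(t,x) + c′(t)·Φ(t,x) − c(t)·v(t)·∂ₓΦ(t,x) = ∫ₓ^{X_max} f(t,ξ) dξ. Then for all t ∈ 𝒯 and y ∈ ℝ, c(t)·Φ(t,y) = ∫₀ᵗ ∫_{y + z(t) − z(s)}^{X_max} f(s,ξ) dξ ds. -/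
open MeasureTheory Set

/-- integral form of the generalized bathtub dynamics.
If `c` is continuously differentiable with `c 0 = 0`, `v` is a continuous positive speed,
`z t = ∫₀ᵗ v`, `f` is a nonnegative jointly integrable in-flow density, and `Φ` is
continuously differentiable and satisfies the bathtub PDE
`c t ∂ₜΦ(t,x) + c' t Φ(t,x) − c t v t ∂ₓΦ(t,x) = ∫ₓ^{Xmax} f(t,ξ) dξ` on `𝒯 = [0,Tmax]`,
then `c t Φ(t,y) = ∫₀ᵗ ∫_{y + z t − z s}^{Xmax} f(s,ξ) dξ ds` for all `t ∈ 𝒯`, `y ∈ ℝ`. -/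
theorem bathtub_integral_form
    (Tmax Xmax : ℝ) (hT : 0 < Tmax) (hX : 0 < Xmax)
    (c v : ℝ → ℝ) (f : ℝ → ℝ → ℝ) (Φ : ℝ → ℝ → ℝ)
    (hc : ContDiff ℝ 1 c) (hc0 : c 0 = 0)
    (hv : Continuous v) (hvpos : ∀ t ∈ Set.Icc (0:ℝ) Tmax, 0 < v t)
    (hf0 : ∀ t x, 0 ≤ f t x)
    (hfint : IntegrableOn (Function.uncurry f)
      (Set.Icc (0:ℝ) Tmax ×ˢ (Set.univ : Set ℝ)))
    (hΦ : ContDiff ℝ 1 (Function.uncurry Φ))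
    (z : ℝ → ℝ) (hz : ∀ t, z t = ∫ s in (0:ℝ)..t, v s)
    (hpde : ∀ t ∈ Set.Icc (0:ℝ) Tmax, ∀ x : ℝ,
      c t * deriv (fun s => Φ s x) t + deriv c t * Φ t x
        - c t * v t * deriv (fun ξ => Φ t ξ) x = ∫ ξ in x..Xmax, f t ξ) :
    ∀ t ∈ Set.Icc (0:ℝ) Tmax, ∀ y : ℝ,
      c t * Φ t y = ∫ s in (0:ℝ)..t, ∫ ξ in (y + z t - z s)..Xmax, f s ξ := by
  intro t ht y
  set D := fderiv ℝ (Function.uncurry Φ) with hD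
  have hΦd : Differentiable ℝ (Function.uncurry Φ) := hΦ.differentiable one_ne_zero
  have hF : ∀ p : ℝ × ℝ, HasFDerivAt (Function.uncurry Φ) (D p) p :=
    fun p => (hΦd p).hasFDerivAt
  have hcd : ∀ s, HasDerivAt c (deriv c s) s :=
    fun s => (hc.differentiable one_ne_zero s).hasDerivAt
  have hzd : ∀ s, HasDerivAt z (v s) s := by
    intro s
    have hzf : z = fun u => ∫ x in (0:ℝ)..u, v x := funext hz
    rw [hzf]
    exact (hv.integral_hasStrictDerivAt 0 s).hasDerivAt
  set X : ℝ → ℝ := fun s => y + z t - z s with hXdef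
  have hXd : ∀ s, HasDerivAt X (-(v s)) s := fun s => (hzd s).const_sub (y + z t)
  set G : ℝ → ℝ := fun s =>
    deriv c s * Φ s (X s) + c s * (D (s, X s) (1, 0) - v s * D (s, X s) (0, 1)) with hGdef
  -- derivative of g = fun s => c s * Φ s (X s)
  have hgd : ∀ s : ℝ, HasDerivAt (fun u => c u * Φ u (X u)) (G s) s := by
    intro s
    have hline : HasDerivAt (fun u => (u, X u)) ((1:ℝ), -(v s)) s :=
      (hasDerivAt_id s).prodMk (hXd s)
    have hcomp : HasDerivAt (fun u => Φ u (X u)) (D (s, X s) (1, -(v s))) s :=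
      by have := (hF (s, X s)).comp_hasDerivAt s hline; exact this
    have hmul := (hcd s).mul hcomp
    have hval : D (s, X s) (1, -(v s)) = D (s, X s) (1, 0) - v s * D (s, X s) (0, 1) := by
      have h1 : ((1:ℝ), -(v s)) = ((1:ℝ), (0:ℝ)) + (-(v s)) • ((0:ℝ), (1:ℝ)) := by
        simp [Prod.ext_iff]
      rw [h1, map_add, ContinuousLinearMap.map_smul, smul_eq_mul]
      ring
    rw [hval] at hmul
    exact hmul
  -- G is continuous
  have hXc : Continuous X := by
    have : Differentiable ℝ z := fun s => (hzd s).differentiableAt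
    exact continuous_const.sub this.continuous
  have hDc : Continuous D := hΦ.continuous_fderiv one_ne_zero
  have hGc : Continuous G := by
    have hpc : Continuous fun s : ℝ => (s, X s) := continuous_id.prodMk hXc
    have h1 : Continuous fun s => Φ s (X s) := hΦ.continuous.comp hpc
    have h2 : Continuous fun s => D (s, X s) (1, 0) :=
      (hDc.comp hpc).clm_apply continuous_const
    have h3 : Continuous fun s => D (s, X s) (0, 1) :=
      (hDc.comp hpc).clm_apply continuous_const
    exact ((hc.continuous_deriv le_rfl).mul h1).add
      (hc.continuous.mul (h2.sub (hv.mul h3)))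
  -- G agrees with the target integrand on [0, t]
  have hEq : Set.EqOn (fun s => ∫ ξ in (y + z t - z s)..Xmax, f s ξ) G (Set.uIcc 0 t) := by
    intro s hs
    rw [Set.uIcc_of_le ht.1] at hs
    have hsT : s ∈ Set.Icc (0:ℝ) Tmax := ⟨hs.1, hs.2.trans ht.2⟩
    have hpde' := hpde s hsT (X s)
    have hd1 : deriv (fun u => Φ u (X s)) s = D (s, X s) (1, 0) := by
      have : HasDerivAt (fun u => Φ u (X s)) (D (s, X s) (1, 0)) s := by
        have hline : HasDerivAt (fun u => (u, X s)) ((1:ℝ), (0:ℝ)) s :=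
          (hasDerivAt_id s).prodMk (hasDerivAt_const s (X s))
        exact (hF (s, X s)).comp_hasDerivAt s hline
      exact this.deriv
    have hd2 : deriv (fun ξ => Φ s ξ) (X s) = D (s, X s) (0, 1) := by
      have : HasDerivAt (fun ξ => Φ s ξ) (D (s, X s) (0, 1)) (X s) := by
        have hline : HasDerivAt (fun ξ : ℝ => (s, ξ)) ((0:ℝ), (1:ℝ)) (X s) :=
          (hasDerivAt_const (X s) s).prodMk (hasDerivAt_id (X s))
        exact (hF (s, X s)).comp_hasDerivAt (X s) hline
      exact this.deriv
    rw [hd1, hd2] at hpde'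
    show (∫ ξ in (y + z t - z s)..Xmax, f s ξ) = G s
    rw [← hpde']
    simp only [hGdef, hXdef]
    ring
  -- conclude via FTC
  have hFTC : (∫ s in (0:ℝ)..t, G s) = c t * Φ t (X t) - c 0 * Φ 0 (X 0) :=
    intervalIntegral.integral_eq_sub_of_hasDerivAt (fun s _ => hgd s)
      (hGc.intervalIntegrable 0 t)
  rw [intervalIntegral.integral_congr hEq, hFTC, hc0]
  have hXt : X t = y := by simp [hXdef]
  rw [hXt]
  ring
end

section
/- For every M > 0, every F ∈ 𝒫_{m,G}, and all z₁, z₂ ∈ C(𝒯), one has d_M(𝒰(z₁,F), 𝒰(z₂,F)) ≤ 2·G·Lip(V)·(M·T_max − 1 + e^{−M·T_max})/M² · d_M(z₁, z₂). In particular, for M large enough that 2·G·Lip(V)·(M·T_max − 1 + e^{−M·T_max})/M² < 1, the map z ↦ 𝒰(z,F) is a contraction on (C(𝒯), d_M). -/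
open MeasureTheory Set Filter

noncomputable section

/-- `Sset Td Xs z t` is the set `S_t(z)` of pairs (departure time, trip length) of the
agents travelling at time `t` in a system with characteristic travel distance `z`:
`S_t(z) = {(τ, ξ) : τ ∈ [0,t] ∩ 𝒯_d, ξ ∈ (z(t) − z(τ), ∞) ∩ 𝒳}`. -/
def Sset (Td Xs : Set ℝ) (z : ℝ → ℝ) (t : ℝ) : Set (ℝ × ℝ) :=
  {p : ℝ × ℝ | p.1 ∈ Set.Icc 0 t ∩ Td ∧ p.2 ∈ Set.Ioi (z t - z p.1) ∩ Xs}

/-- `memP Td Xs Ta m G F` says that `F ∈ 𝒫_{m,G}`: `F` is a Borel probability measure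
on `𝒯_d × 𝒳` with `F(B) ≤ G·λ₂(B)` for every Borel `B` and whose `𝒳`-marginal agrees
with that of the demand profile `m`, i.e. `F(𝒯_d × Q) = m(Q × 𝒯_a)` for all Borel `Q`. -/
def memP (Td Xs Ta : Set ℝ) (m : Measure (ℝ × ℝ)) (G : ℝ) (F : Measure (ℝ × ℝ)) : Prop :=
  IsProbabilityMeasure F ∧ F ((Td ×ˢ Xs)ᶜ) = 0 ∧
    (∀ B : Set (ℝ × ℝ), MeasurableSet B → F B ≤ ENNReal.ofReal G * volume B) ∧
    ∀ Q : Set ℝ, MeasurableSet Q → F (Td ×ˢ Q) = m (Q ×ˢ Ta)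

/-- The map `𝒰(z, F)(t) = ∫₀ᵗ V(F(S_s(z))) ds`. -/
def Umap (Td Xs : Set ℝ) (V : ℝ → ℝ) (F : Measure (ℝ × ℝ)) (z : ℝ → ℝ) (t : ℝ) : ℝ :=
  ∫ s in (0:ℝ)..t, V ((F (Sset Td Xs z s)).toReal)

/-- The distance associated with the norm `‖u‖_M = sup_{t ∈ [0,Tmax]} e^{−Mt}|u(t)|`. -/
def dM (M Tmax : ℝ) (u w : ℝ → ℝ) : ℝ :=
  ⨆ t : Set.Icc (0:ℝ) Tmax, Real.exp (-(M * t.1)) * |u t.1 - w t.1|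

lemma one_sub_exp_neg_le (x : ℝ) : 1 - Real.exp (-x) ≤ x := by
  have := Real.add_one_le_exp (-x); linarith

lemma band_volume_le (b C : ℝ) (hb : 0 ≤ b) (hC : 0 ≤ C) (f g : ℝ → ℝ)
    (hf : Measurable f) (hg : Measurable g)
    (hfg : ∀ τ ∈ Set.Icc (0:ℝ) b, g τ - f τ ≤ C) :
    volume {p : ℝ × ℝ | p.1 ∈ Set.Icc 0 b ∧ p.2 ∈ Set.Ioc (f p.1) (g p.1)}
      ≤ ENNReal.ofReal (b * C) := by
  set E : Set (ℝ × ℝ) := {p : ℝ × ℝ | p.1 ∈ Set.Icc 0 b ∧ p.2 ∈ Set.Ioc (f p.1) (g p.1)} with hE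
  have hmeas : MeasurableSet E := by
    have h1 : MeasurableSet {p : ℝ × ℝ | p.1 ∈ Set.Icc (0:ℝ) b} :=
      (measurableSet_Icc.preimage measurable_fst)
    have h2 : MeasurableSet {p : ℝ × ℝ | f p.1 < p.2} :=
      measurableSet_lt (hf.comp measurable_fst) measurable_snd
    have h3 : MeasurableSet {p : ℝ × ℝ | p.2 ≤ g p.1} :=
      measurableSet_le measurable_snd (hg.comp measurable_fst)
    have : E = {p : ℝ × ℝ | p.1 ∈ Set.Icc (0:ℝ) b} ∩
        ({p : ℝ × ℝ | f p.1 < p.2} ∩ {p : ℝ × ℝ | p.2 ≤ g p.1}) := by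
      ext p; simp [hE, Set.mem_Ioc, and_assoc]
    rw [this]; exact h1.inter (h2.inter h3)
  rw [Measure.volume_eq_prod, Measure.prod_apply hmeas]
  have hsec : ∀ τ : ℝ, volume (Prod.mk τ ⁻¹' E)
      ≤ (Set.Icc (0:ℝ) b).indicator (fun _ => ENNReal.ofReal C) τ := by
    intro τ
    by_cases hτ : τ ∈ Set.Icc (0:ℝ) b
    · have hps : Prod.mk τ ⁻¹' E = Set.Ioc (f τ) (g τ) := by
        ext x
        simp only [hE, Set.mem_preimage, Set.mem_setOf_eq]
        exact ⟨fun h => h.2, fun h => ⟨hτ, h⟩⟩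
      rw [hps, Set.indicator_of_mem hτ, Real.volume_Ioc]
      exact ENNReal.ofReal_le_ofReal (by linarith [hfg τ hτ])
    · have hps : Prod.mk τ ⁻¹' E = ∅ := by
        ext x
        simp only [hE, Set.mem_preimage, Set.mem_setOf_eq, Set.mem_empty_iff_false, iff_false,
          not_and]
        exact fun h => absurd h hτ
      simp [hps, Set.indicator_of_notMem hτ]
  calc ∫⁻ τ, volume (Prod.mk τ ⁻¹' E)
      ≤ ∫⁻ τ, (Set.Icc (0:ℝ) b).indicator (fun _ => ENNReal.ofReal C) τ :=
        lintegral_mono hsec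
    _ = ENNReal.ofReal C * volume (Set.Icc (0:ℝ) b) := by
        rw [lintegral_indicator measurableSet_Icc, setLIntegral_const]
    _ = ENNReal.ofReal (b * C) := by
        rw [Real.volume_Icc, ← ENNReal.ofReal_mul hC]
        ring_nf
lemma abs_measure_toReal_sub (F : Measure (ℝ × ℝ)) [IsProbabilityMeasure F]
    (A B : Set (ℝ × ℝ)) :
    |(F A).toReal - (F B).toReal| ≤ (F ((A \ B) ∪ (B \ A))).toReal := by
  have hfin : ∀ S : Set (ℝ × ℝ), F S ≠ ⊤ := fun S => (measure_lt_top F S).ne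
  have key : ∀ A B : Set (ℝ × ℝ),
      (F A).toReal - (F B).toReal ≤ (F ((A \ B) ∪ (B \ A))).toReal := by
    intro A B
    have h1 : F A ≤ F B + F ((A \ B) ∪ (B \ A)) := by
      calc F A ≤ F (B ∪ ((A \ B) ∪ (B \ A))) := by
            apply measure_mono
            intro x hx
            by_cases hB : x ∈ B
            · exact Or.inl hB
            · exact Or.inr (Or.inl ⟨hx, hB⟩)
        _ ≤ F B + F ((A \ B) ∪ (B \ A)) := measure_union_le _ _
    have h2 : (F A).toReal ≤ (F B + F ((A \ B) ∪ (B \ A))).toReal :=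
      ENNReal.toReal_mono (by simp [ENNReal.add_ne_top, hfin]) h1
    rw [ENNReal.toReal_add (hfin _) (hfin _)] at h2
    linarith
  rw [abs_sub_le_iff]
  constructor
  · exact key A B
  · have := key B A
    rwa [Set.union_comm] at this

lemma measurableSet_Sset (Td Xs : Set ℝ) (hTd : MeasurableSet Td) (hXs : MeasurableSet Xs)
    (z : ℝ → ℝ) (hz : Continuous z) (s : ℝ) : MeasurableSet (Sset Td Xs z s) := by
  have heq : Sset Td Xs z s = ({p : ℝ × ℝ | p.1 ∈ Set.Icc 0 s ∩ Td} ∩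
      ({p : ℝ × ℝ | z s - z p.1 < p.2} ∩ {p : ℝ × ℝ | p.2 ∈ Xs})) := by
    ext p
    simp only [Sset, Set.mem_setOf_eq, Set.mem_inter_iff, Set.mem_Ioi]
  rw [heq]
  exact ((measurableSet_Icc.inter hTd).preimage measurable_fst).inter
    ((measurableSet_lt (measurable_const.sub (hz.measurable.comp measurable_fst))
      measurable_snd).inter (hXs.preimage measurable_snd))

lemma symmDiff_Sset_subset (Td : Set ℝ) (Xmin Xmax : ℝ) (z w : ℝ → ℝ) (s s' : ℝ)
    (hss : s ≤ s') :
    (Sset Td (Set.Icc Xmin Xmax) z s \ Sset Td (Set.Icc Xmin Xmax) w s') ∪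
      (Sset Td (Set.Icc Xmin Xmax) w s' \ Sset Td (Set.Icc Xmin Xmax) z s)
    ⊆ {p : ℝ × ℝ | p.1 ∈ Set.Icc 0 s' ∧ p.2 ∈ Set.Ioc
          (min (z s - z p.1) (w s' - w p.1)) (max (z s - z p.1) (w s' - w p.1))}
      ∪ (Set.Ioc s s' ×ˢ Set.Icc Xmin Xmax) := by
  rintro ⟨τ, ξ⟩ (⟨hA, hB⟩ | ⟨hB, hA⟩)
  · obtain ⟨⟨hτI, hτd⟩, hξgt, hξX⟩ := hA
    left
    refine ⟨⟨hτI.1, hτI.2.trans hss⟩, lt_of_le_of_lt (min_le_left _ _) hξgt, ?_⟩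
    by_contra h
    push_neg at h
    exact hB ⟨⟨⟨hτI.1, hτI.2.trans hss⟩, hτd⟩,
      lt_of_le_of_lt (le_max_right _ _) h, hξX⟩
  · obtain ⟨⟨hτI, hτd⟩, hξgt, hξX⟩ := hB
    by_cases hτs : τ ≤ s
    · left
      refine ⟨hτI, lt_of_le_of_lt (min_le_right _ _) hξgt, ?_⟩
      by_contra h
      push_neg at h
      exact hA ⟨⟨⟨hτI.1, hτs⟩, hτd⟩, lt_of_le_of_lt (le_max_left _ _) h, hξX⟩
    · right
      exact ⟨⟨lt_of_not_ge hτs, hτI.2⟩, hξX⟩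
lemma F_Sset_diff_le (Td : Set ℝ) (hTdm : MeasurableSet Td) (Xmin Xmax : ℝ)
    (hXX : Xmin ≤ Xmax)
    (F : Measure (ℝ × ℝ)) [IsProbabilityMeasure F] (G : ℝ) (hG : 0 ≤ G)
    (hFle : ∀ B : Set (ℝ × ℝ), MeasurableSet B → F B ≤ ENNReal.ofReal G * volume B)
    (z w : ℝ → ℝ) (hz : Continuous z) (hw : Continuous w) (s s' : ℝ)
    (hss : s ≤ s') (hs' : 0 ≤ s') (C : ℝ) (hC : 0 ≤ C)
    (hCb : ∀ τ ∈ Set.Icc (0:ℝ) s', |(z s - z τ) - (w s' - w τ)| ≤ C) :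
    |(F (Sset Td (Set.Icc Xmin Xmax) z s)).toReal
        - (F (Sset Td (Set.Icc Xmin Xmax) w s')).toReal|
      ≤ G * (s' * C + (s' - s) * (Xmax - Xmin)) := by
  set A := Sset Td (Set.Icc Xmin Xmax) z s
  set B := Sset Td (Set.Icc Xmin Xmax) w s'
  have hAm : MeasurableSet A := measurableSet_Sset _ _ hTdm measurableSet_Icc z hz s
  have hBm : MeasurableSet B := measurableSet_Sset _ _ hTdm measurableSet_Icc w hw s'
  have hΔm : MeasurableSet ((A \ B) ∪ (B \ A)) := (hAm.diff hBm).union (hBm.diff hAm)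
  have h1 := abs_measure_toReal_sub F A B
  have hband : volume {p : ℝ × ℝ | p.1 ∈ Set.Icc 0 s' ∧ p.2 ∈ Set.Ioc
        (min (z s - z p.1) (w s' - w p.1)) (max (z s - z p.1) (w s' - w p.1))}
      ≤ ENNReal.ofReal (s' * C) := by
    apply band_volume_le s' C hs' hC _ _
      ((measurable_const.sub hz.measurable).min (measurable_const.sub hw.measurable))
      ((measurable_const.sub hz.measurable).max (measurable_const.sub hw.measurable))
    intro τ hτ
    rw [max_sub_min_eq_abs']
    exact hCb τ hτ
  have hstrip : volume (Set.Ioc s s' ×ˢ Set.Icc Xmin Xmax)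
      = ENNReal.ofReal ((s' - s) * (Xmax - Xmin)) := by
    rw [Measure.volume_eq_prod, Measure.prod_prod, Real.volume_Ioc, Real.volume_Icc,
      ← ENNReal.ofReal_mul (by linarith)]
  have hvol : volume ((A \ B) ∪ (B \ A))
      ≤ ENNReal.ofReal (s' * C + (s' - s) * (Xmax - Xmin)) := by
    calc volume ((A \ B) ∪ (B \ A))
        ≤ volume ({p : ℝ × ℝ | p.1 ∈ Set.Icc 0 s' ∧ p.2 ∈ Set.Ioc
              (min (z s - z p.1) (w s' - w p.1)) (max (z s - z p.1) (w s' - w p.1))}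
            ∪ Set.Ioc s s' ×ˢ Set.Icc Xmin Xmax) :=
          measure_mono (symmDiff_Sset_subset Td Xmin Xmax z w s s' hss)
      _ ≤ _ + _ := measure_union_le _ _
      _ ≤ ENNReal.ofReal (s' * C) + ENNReal.ofReal ((s' - s) * (Xmax - Xmin)) := by
          rw [hstrip]; exact add_le_add_left hband _
      _ = ENNReal.ofReal (s' * C + (s' - s) * (Xmax - Xmin)) := by
          rw [← ENNReal.ofReal_add (by positivity) (by nlinarith)]
  have hFΔ : (F ((A \ B) ∪ (B \ A))).toReal ≤ G * (s' * C + (s' - s) * (Xmax - Xmin)) := by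
    have hrhs : (0:ℝ) ≤ s' * C + (s' - s) * (Xmax - Xmin) := by
      nlinarith [mul_nonneg hs' hC, mul_nonneg (sub_nonneg.2 hss) (sub_nonneg.2 hXX)]
    apply ENNReal.toReal_le_of_le_ofReal (mul_nonneg hG hrhs)
    calc F ((A \ B) ∪ (B \ A)) ≤ ENNReal.ofReal G * volume ((A \ B) ∪ (B \ A)) :=
          hFle _ hΔm
      _ ≤ ENNReal.ofReal G * ENNReal.ofReal (s' * C + (s' - s) * (Xmax - Xmin)) :=
          mul_le_mul_right hvol _
      _ = ENNReal.ofReal (G * (s' * C + (s' - s) * (Xmax - Xmin))) :=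
          (ENNReal.ofReal_mul hG).symm
  linarith
lemma Sset_empty (Td Xs : Set ℝ) (z : ℝ → ℝ) (s : ℝ) (hs : s < 0) :
    Sset Td Xs z s = ∅ := by
  ext ⟨τ, ξ⟩
  simp only [Sset, Set.mem_setOf_eq, Set.mem_empty_iff_false, iff_false, not_and,
    Set.mem_inter_iff, Set.mem_Icc]
  rintro ⟨⟨h0, h1⟩, -⟩
  exact absurd (h0.trans h1) (not_le.2 hs)

lemma continuous_F_Sset (Td : Set ℝ) (hTdm : MeasurableSet Td) (Xmin Xmax : ℝ)
    (hXX : Xmin ≤ Xmax)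
    (F : Measure (ℝ × ℝ)) [IsProbabilityMeasure F] (G : ℝ) (hG : 0 ≤ G)
    (hFle : ∀ B : Set (ℝ × ℝ), MeasurableSet B → F B ≤ ENNReal.ofReal G * volume B)
    (z : ℝ → ℝ) (hz : Continuous z) :
    Continuous (fun s => (F (Sset Td (Set.Icc Xmin Xmax) z s)).toReal) := by
  rw [continuous_iff_continuousAt]
  intro s₀
  set g := fun s => (F (Sset Td (Set.Icc Xmin Xmax) z s)).toReal with hgdef
  set h := fun s => G * ((max (max s s₀) 0) * |z s - z s₀| + |s - s₀| * (Xmax - Xmin))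
    with hhdef
  have hb : ∀ s : ℝ, |g s - g s₀| ≤ h s := by
    intro s
    have hm0 : (0:ℝ) ≤ max (max s s₀) 0 := le_max_right _ _
    have hrhs0 : 0 ≤ h s := by
      simp only [hhdef]
      have := abs_nonneg (z s - z s₀)
      have := abs_nonneg (s - s₀)
      nlinarith [mul_nonneg hm0 (abs_nonneg (z s - z s₀)),
        mul_nonneg (abs_nonneg (s - s₀)) (sub_nonneg.2 hXX)]
    rcases le_total s s₀ with hle | hle
    · rcases le_or_gt 0 s₀ with h0 | h0
      · have key := F_Sset_diff_le Td hTdm Xmin Xmax hXX F G hG hFle z z hz hz s s₀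
          hle h0 (|z s - z s₀|) (abs_nonneg _)
          (fun τ _ => le_of_eq (by congr 1; ring))
        have h1 : s₀ ≤ max (max s s₀) 0 := le_max_of_le_left (le_max_right _ _)
        have h2 : s₀ - s = |s - s₀| := by
          rw [abs_sub_comm, abs_of_nonneg (by linarith)]
        calc |g s - g s₀| ≤ G * (s₀ * |z s - z s₀| + (s₀ - s) * (Xmax - Xmin)) := key
          _ ≤ h s := by
            simp only [hhdef]
            nth_rewrite 1 [h2]
            have := mul_le_mul_of_nonneg_right h1 (abs_nonneg (z s - z s₀))
            nlinarith [mul_nonneg hG (mul_nonneg (abs_nonneg (s - s₀)) (sub_nonneg.2 hXX))]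
      · have hes : Sset Td (Set.Icc Xmin Xmax) z s = ∅ :=
          Sset_empty _ _ _ _ (by linarith)
        have hes₀ : Sset Td (Set.Icc Xmin Xmax) z s₀ = ∅ := Sset_empty _ _ _ _ h0
        simp only [hgdef, hes, hes₀, measure_empty, ENNReal.toReal_zero, sub_self, abs_zero]
        exact hrhs0
    · rcases le_or_gt 0 s with h0 | h0
      · have key := F_Sset_diff_le Td hTdm Xmin Xmax hXX F G hG hFle z z hz hz s₀ s
          hle h0 (|z s - z s₀|) (abs_nonneg _)
          (fun τ _ => le_of_eq (by rw [abs_sub_comm]; congr 1; ring))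
        have h1 : s ≤ max (max s s₀) 0 := le_max_of_le_left (le_max_left _ _)
        have h2 : s - s₀ = |s - s₀| := by rw [abs_of_nonneg (by linarith)]
        rw [abs_sub_comm]
        calc |g s₀ - g s| ≤ G * (s * |z s - z s₀| + (s - s₀) * (Xmax - Xmin)) := key
          _ ≤ h s := by
            simp only [hhdef]
            nth_rewrite 1 [h2]
            have := mul_le_mul_of_nonneg_right h1 (abs_nonneg (z s - z s₀))
            nlinarith [mul_nonneg hG (mul_nonneg (abs_nonneg (s - s₀)) (sub_nonneg.2 hXX))]
      · have hes : Sset Td (Set.Icc Xmin Xmax) z s = ∅ := Sset_empty _ _ _ _ h0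
        have hes₀ : Sset Td (Set.Icc Xmin Xmax) z s₀ = ∅ :=
          Sset_empty _ _ _ _ (by linarith)
        simp only [hgdef, hes, hes₀, measure_empty, ENNReal.toReal_zero, sub_self, abs_zero]
        exact hrhs0
  have hhcont : Continuous h := by
    apply continuous_const.mul
    apply Continuous.add
    · exact (((continuous_id.max continuous_const).max continuous_const).mul
        ((hz.sub continuous_const).abs))
    · exact ((continuous_id.sub continuous_const).abs).mul continuous_const
  have hT0 : Tendsto h (nhds s₀) (nhds 0) := by
    have := hhcont.tendsto s₀
    simpa [hhdef] using this
  have hdist : Tendsto (fun s => |g s - g s₀|) (nhds s₀) (nhds 0) :=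
    squeeze_zero (fun s => abs_nonneg _) hb hT0
  rw [ContinuousAt, tendsto_iff_dist_tendsto_zero]
  simpa [Real.dist_eq] using hdist

/-- Proof of Proposition 2: contraction estimate.
For every `M > 0`, every `F ∈ 𝒫_{m,G}` and all `z₁, z₂ ∈ C(𝒯)`,
`d_M(𝒰(z₁,F), 𝒰(z₂,F)) ≤ 2·G·Lip(V)·(M·Tmax − 1 + e^{−M·Tmax})/M² · d_M(z₁,z₂)`;
in particular `z ↦ 𝒰(z,F)` is a contraction on `(C(𝒯), d_M)` whenever this factor is `< 1`. -/
theorem Umap_contraction_estimate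
    (Tmax Xmin Xmax G : ℝ) (hT : 0 < Tmax) (hXmin : 0 < Xmin) (hXX : Xmin < Xmax)
    (hG : 0 < G)
    (Td Ta : Set ℝ) (hTdc : IsCompact Td) (hTd : Td ⊆ Set.Icc 0 Tmax)
    (hTac : IsCompact Ta) (hTa : Ta ⊆ Set.Icc 0 Tmax)
    (m : Measure (ℝ × ℝ)) (hm : IsProbabilityMeasure m)
    (V : ℝ → ℝ) (LV : NNReal) (hV : LipschitzOnWith LV V (Set.Ici 0))
    (hVpos : ∀ c : ℝ, 0 ≤ c → 0 < V c)
    (F : Measure (ℝ × ℝ)) (hF : memP Td (Set.Icc Xmin Xmax) Ta m G F)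
    (M : ℝ) (hM : 0 < M)
    (z₁ z₂ : ℝ → ℝ) (hz₁ : Continuous z₁) (hz₂ : Continuous z₂) :
    dM M Tmax (Umap Td (Set.Icc Xmin Xmax) V F z₁) (Umap Td (Set.Icc Xmin Xmax) V F z₂)
      ≤ (2 * G * (LV : ℝ) * (M * Tmax - 1 + Real.exp (-(M * Tmax))) / M ^ 2)
          * dM M Tmax z₁ z₂ := by
  obtain ⟨hFprob, hFsupp, hFle, hFmarg⟩ := hF
  haveI := hFprob
  have hTdm : MeasurableSet Td := hTdc.measurableSet
  have hXX' : Xmin ≤ Xmax := le_of_lt hXX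
  have hM0 : M ≠ 0 := ne_of_gt hM
  set X := Set.Icc Xmin Xmax with hXdef
  set d := dM M Tmax z₁ z₂ with hddef
  haveI hne : Nonempty (Set.Icc (0:ℝ) Tmax) := ⟨⟨0, le_refl 0, hT.le⟩⟩
  -- bounds coming from the definition of d
  have hcf : Continuous (fun t : ℝ => Real.exp (-(M * t)) * |z₁ t - z₂ t|) :=
    (Real.continuous_exp.comp (continuous_const.mul continuous_id).neg).mul
      ((hz₁.sub hz₂).abs)
  have hbdd : BddAbove (Set.range fun t : Set.Icc (0:ℝ) Tmax =>
      Real.exp (-(M * t.1)) * |z₁ t.1 - z₂ t.1|) := by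
    rw [show (fun t : Set.Icc (0:ℝ) Tmax => Real.exp (-(M * t.1)) * |z₁ t.1 - z₂ t.1|)
        = (fun t : ℝ => Real.exp (-(M * t)) * |z₁ t - z₂ t|) ∘ Subtype.val from rfl,
      Set.range_comp, Subtype.range_coe]
    exact (isCompact_Icc.image hcf).bddAbove
  have hdle : ∀ τ ∈ Set.Icc (0:ℝ) Tmax,
      Real.exp (-(M * τ)) * |z₁ τ - z₂ τ| ≤ d := by
    intro τ hτ
    exact le_ciSup hbdd (⟨τ, hτ⟩ : Set.Icc (0:ℝ) Tmax)
  have hd0 : 0 ≤ d :=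
    le_trans (mul_nonneg (Real.exp_pos _).le (abs_nonneg _))
      (hdle 0 ⟨le_refl 0, hT.le⟩)
  have hzd : ∀ τ ∈ Set.Icc (0:ℝ) Tmax, |z₁ τ - z₂ τ| ≤ Real.exp (M * τ) * d := by
    intro τ hτ
    calc |z₁ τ - z₂ τ|
        = Real.exp (M * τ) * (Real.exp (-(M * τ)) * |z₁ τ - z₂ τ|) := by
          rw [← mul_assoc, ← Real.exp_add]
          simp
      _ ≤ Real.exp (M * τ) * d :=
          mul_le_mul_of_nonneg_left (hdle τ hτ) (Real.exp_pos _).le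
  -- the integrands
  set f₁ := fun s => V ((F (Sset Td X z₁ s)).toReal) with hf₁def
  set f₂ := fun s => V ((F (Sset Td X z₂ s)).toReal) with hf₂def
  have hcont₁ : Continuous f₁ :=
    hV.continuousOn.comp_continuous
      (continuous_F_Sset Td hTdm Xmin Xmax hXX' F G hG.le hFle z₁ hz₁)
      (fun s => Set.mem_Ici.2 ENNReal.toReal_nonneg)
  have hcont₂ : Continuous f₂ :=
    hV.continuousOn.comp_continuous
      (continuous_F_Sset Td hTdm Xmin Xmax hXX' F G hG.le hFle z₂ hz₂)
      (fun s => Set.mem_Ici.2 ENNReal.toReal_nonneg)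
  -- pointwise bound on the integrand difference
  have key : ∀ s ∈ Set.Icc (0:ℝ) Tmax,
      |f₁ s - f₂ s| ≤ (2 * G * (LV : ℝ) * d) * (s * Real.exp (M * s)) := by
    intro s hs
    have hC : ∀ τ ∈ Set.Icc (0:ℝ) s,
        |(z₁ s - z₁ τ) - (z₂ s - z₂ τ)| ≤ 2 * Real.exp (M * s) * d := by
      intro τ hτ
      have hτT : τ ∈ Set.Icc (0:ℝ) Tmax := ⟨hτ.1, hτ.2.trans hs.2⟩
      have h1 := hzd s hs
      have h2 := hzd τ hτT
      have hee : Real.exp (M * τ) ≤ Real.exp (M * s) :=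
        Real.exp_le_exp.2 (mul_le_mul_of_nonneg_left hτ.2 hM.le)
      calc |(z₁ s - z₁ τ) - (z₂ s - z₂ τ)|
          = |(z₁ s - z₂ s) - (z₁ τ - z₂ τ)| := by congr 1; ring
        _ ≤ |z₁ s - z₂ s| + |z₁ τ - z₂ τ| := abs_sub _ _
        _ ≤ Real.exp (M * s) * d + Real.exp (M * τ) * d := add_le_add h1 h2
        _ ≤ 2 * Real.exp (M * s) * d := by
            nlinarith [mul_le_mul_of_nonneg_right hee hd0]
    have hFd := F_Sset_diff_le Td hTdm Xmin Xmax hXX' F G hG.le hFle z₁ z₂ hz₁ hz₂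
      s s le_rfl hs.1 (2 * Real.exp (M * s) * d)
      (by positivity) hC
    have hab : |(F (Sset Td X z₁ s)).toReal - (F (Sset Td X z₂ s)).toReal|
        ≤ G * (s * (2 * Real.exp (M * s) * d)) := by
      have h0 : G * (s * (2 * Real.exp (M * s) * d) + (s - s) * (Xmax - Xmin))
          = G * (s * (2 * Real.exp (M * s) * d)) := by ring
      rw [← h0]
      exact hFd
    have hL : |f₁ s - f₂ s|
        ≤ (LV : ℝ) * |(F (Sset Td X z₁ s)).toReal - (F (Sset Td X z₂ s)).toReal| := by
      have := hV.dist_le_mul _ (Set.mem_Ici.2 (ENNReal.toReal_nonneg :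
          (0:ℝ) ≤ (F (Sset Td X z₁ s)).toReal)) _
        (Set.mem_Ici.2 (ENNReal.toReal_nonneg : (0:ℝ) ≤ (F (Sset Td X z₂ s)).toReal))
      simpa [Real.dist_eq, hf₁def, hf₂def] using this
    calc |f₁ s - f₂ s|
        ≤ (LV : ℝ) * (G * (s * (2 * Real.exp (M * s) * d))) :=
          le_trans hL (mul_le_mul_of_nonneg_left hab LV.coe_nonneg)
      _ = (2 * G * (LV : ℝ) * d) * (s * Real.exp (M * s)) := by ring
  -- bound on |Umap z₁ t - Umap z₂ t|
  have hmono : ∀ t ∈ Set.Icc (0:ℝ) Tmax,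
      |Umap Td X V F z₁ t - Umap Td X V F z₂ t|
        ≤ (2 * G * (LV : ℝ) * d) * ((t / M - 1 / M ^ 2) * Real.exp (M * t) + 1 / M ^ 2) := by
    intro t ht
    have hInt₁ : IntervalIntegrable f₁ volume 0 t := hcont₁.intervalIntegrable _ _
    have hInt₂ : IntervalIntegrable f₂ volume 0 t := hcont₂.intervalIntegrable _ _
    have hsub : Umap Td X V F z₁ t - Umap Td X V F z₂ t
        = ∫ s in (0:ℝ)..t, (f₁ s - f₂ s) := by
      rw [intervalIntegral.integral_sub hInt₁ hInt₂]
      rfl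
    have hcontbd : Continuous (fun s : ℝ => (2 * G * (LV : ℝ) * d) * (s * Real.exp (M * s))) :=
      continuous_const.mul (continuous_id.mul
        (Real.continuous_exp.comp (continuous_const.mul continuous_id)))
    have hmono2 : ∫ s in (0:ℝ)..t, |f₁ s - f₂ s|
        ≤ ∫ s in (0:ℝ)..t, (2 * G * (LV : ℝ) * d) * (s * Real.exp (M * s)) := by
      apply intervalIntegral.integral_mono_on ht.1
        ((hcont₁.sub hcont₂).abs.intervalIntegrable _ _)
        (hcontbd.intervalIntegrable _ _)
      intro s hs
      exact key s ⟨hs.1, hs.2.trans ht.2⟩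
    have hderiv : ∀ s ∈ Set.uIcc (0:ℝ) t,
        HasDerivAt (fun s => (s / M - 1 / M ^ 2) * Real.exp (M * s))
          (s * Real.exp (M * s)) s := by
      intro s _
      have h1 : HasDerivAt (fun s : ℝ => s / M - 1 / M ^ 2) (1 / M) s :=
        ((hasDerivAt_id s).div_const M).sub_const (1 / M ^ 2)
      have h2 : HasDerivAt (fun s : ℝ => Real.exp (M * s)) (Real.exp (M * s) * M) s := by
        have := (Real.hasDerivAt_exp (M * s)).comp s ((hasDerivAt_id s).const_mul M)
        simpa [mul_comm, Function.comp_def] using this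
      have h3 := h1.mul h2
      refine h3.congr_deriv ?_
      linear_combination (s * Real.exp (M * s) - M⁻¹ * Real.exp (M * s)) * (mul_inv_cancel₀ hM0)
    have hcexp : Continuous (fun s : ℝ => s * Real.exp (M * s)) :=
      continuous_id.mul (Real.continuous_exp.comp (continuous_const.mul continuous_id))
    have hcalc : ∫ s in (0:ℝ)..t, s * Real.exp (M * s)
        = (t / M - 1 / M ^ 2) * Real.exp (M * t) + 1 / M ^ 2 := by
      rw [intervalIntegral.integral_eq_sub_of_hasDerivAt hderiv
        (hcexp.intervalIntegrable _ _)]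
      simp [Real.exp_zero]
    calc |Umap Td X V F z₁ t - Umap Td X V F z₂ t|
        = |∫ s in (0:ℝ)..t, (f₁ s - f₂ s)| := by rw [hsub]
      _ ≤ ∫ s in (0:ℝ)..t, |f₁ s - f₂ s| :=
          intervalIntegral.abs_integral_le_integral_abs ht.1
      _ ≤ ∫ s in (0:ℝ)..t, (2 * G * (LV : ℝ) * d) * (s * Real.exp (M * s)) := hmono2
      _ = (2 * G * (LV : ℝ) * d) * ∫ s in (0:ℝ)..t, s * Real.exp (M * s) :=
          intervalIntegral.integral_const_mul _ _
      _ = (2 * G * (LV : ℝ) * d) * ((t / M - 1 / M ^ 2) * Real.exp (M * t) + 1 / M ^ 2) := by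
          rw [hcalc]
  -- final assembly
  show dM M Tmax (Umap Td X V F z₁) (Umap Td X V F z₂) ≤ _
  unfold dM
  apply ciSup_le
  rintro ⟨t, ht⟩
  have hU := hmono t ht
  have he : Real.exp (-(M * t)) * Real.exp (M * t) = 1 := by
    rw [← Real.exp_add]; simp
  have hstep : Real.exp (-(M * t)) * |Umap Td X V F z₁ t - Umap Td X V F z₂ t|
      ≤ (2 * G * (LV : ℝ) * d) * ((M * t - 1 + Real.exp (-(M * t))) / M ^ 2) := by
    have h1 := mul_le_mul_of_nonneg_left hU (Real.exp_pos (-(M * t))).le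
    have h2 : Real.exp (-(M * t)) *
        ((2 * G * (LV : ℝ) * d) * ((t / M - 1 / M ^ 2) * Real.exp (M * t) + 1 / M ^ 2))
        = (2 * G * (LV : ℝ) * d) * ((t / M - 1 / M ^ 2) *
            (Real.exp (-(M * t)) * Real.exp (M * t)) + Real.exp (-(M * t)) / M ^ 2) := by
      ring
    rw [h2, he] at h1
    calc Real.exp (-(M * t)) * |Umap Td X V F z₁ t - Umap Td X V F z₂ t|
        ≤ (2 * G * (LV : ℝ) * d) * ((t / M - 1 / M ^ 2) * 1 + Real.exp (-(M * t)) / M ^ 2) := h1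
      _ = (2 * G * (LV : ℝ) * d) * ((M * t - 1 + Real.exp (-(M * t))) / M ^ 2) := by
          field_simp
  have hmono3 : (M * t - 1 + Real.exp (-(M * t))) / M ^ 2
      ≤ (M * Tmax - 1 + Real.exp (-(M * Tmax))) / M ^ 2 := by
    have e1 : Real.exp (-(M * t)) ≤ 1 :=
      Real.exp_le_one_iff.2 (by nlinarith [ht.1])
    have e4 : Real.exp (-(M * (Tmax - t))) ≤ 1 :=
      Real.exp_le_one_iff.2 (by nlinarith [ht.2])
    have e2 : 1 - Real.exp (-(M * (Tmax - t))) ≤ M * (Tmax - t) := one_sub_exp_neg_le _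
    have e3 : Real.exp (-(M * Tmax))
        = Real.exp (-(M * t)) * Real.exp (-(M * (Tmax - t))) := by
      rw [← Real.exp_add]; ring_nf
    have hineq : M * t - 1 + Real.exp (-(M * t))
        ≤ M * Tmax - 1 + Real.exp (-(M * Tmax)) := by
      rw [e3]
      nlinarith [mul_nonneg (sub_nonneg.2 e1) (sub_nonneg.2 e4)]
    exact (div_le_div_iff_of_pos_right (pow_pos hM 2)).2 hineq
  have hK0 : (0:ℝ) ≤ 2 * G * (LV : ℝ) * d :=
    mul_nonneg (mul_nonneg (mul_nonneg (by norm_num) hG.le) LV.coe_nonneg) hd0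
  calc Real.exp (-(M * t)) * |Umap Td X V F z₁ t - Umap Td X V F z₂ t|
      ≤ (2 * G * (LV : ℝ) * d) * ((M * t - 1 + Real.exp (-(M * t))) / M ^ 2) := hstep
    _ ≤ (2 * G * (LV : ℝ) * d) * ((M * Tmax - 1 + Real.exp (-(M * Tmax))) / M ^ 2) :=
        mul_le_mul_of_nonneg_left hmono3 hK0
    _ = (2 * G * (LV : ℝ) * (M * Tmax - 1 + Real.exp (-(M * Tmax))) / M ^ 2) * d := by
        ring
end
end

section
/- For every in-flow measure F ∈ 𝒫_{m,G} and every Lipschitz continuous speed function V : [0,∞) → (0,∞), there exists a unique function z_F ∈ C(𝒯) satisfying z_F(t) = ∫₀ᵗ V(F(S_s(z_F))) ds for all t ∈ 𝒯, where S_t(z_F) := {(τ, ξ) : τ ∈ [0,t] ∩ 𝒯_d, ξ ∈ (z_F(t) − z_F(τ), ∞) ∩ 𝒳}. -/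
open MeasureTheory Set Filter

noncomputable section

namespace CTD

lemma strip_vol (b a Xmin Xmax : ℝ) :
    volume ((Set.Ioc b a ×ˢ Set.Icc Xmin Xmax) : Set (ℝ × ℝ))
      = ENNReal.ofReal (a - b) * ENNReal.ofReal (Xmax - Xmin) := by
  rw [Measure.volume_eq_prod, Measure.prod_prod, Real.volume_Ioc, Real.volume_Icc]

lemma regionA_vol (c : ℝ → ℝ) (hc : Continuous c) (a r : ℝ) (hr : 0 ≤ r) :
    volume {p : ℝ × ℝ | p.1 ∈ Set.Icc 0 a ∧ p.2 ∈ Set.Ioc (c p.1) (c p.1 + r)}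
      = ENNReal.ofReal a * ENNReal.ofReal r := by
  have hA : MeasurableSet {p : ℝ × ℝ | p.1 ∈ Set.Icc 0 a ∧ p.2 ∈ Set.Ioc (c p.1) (c p.1 + r)} := by
    have h1 : MeasurableSet {p : ℝ × ℝ | p.1 ∈ Set.Icc 0 a} :=
      measurableSet_Icc.preimage measurable_fst
    have h2 : MeasurableSet {p : ℝ × ℝ | c p.1 < p.2} :=
      measurableSet_lt (hc.comp continuous_fst).measurable measurable_snd
    have h3 : MeasurableSet {p : ℝ × ℝ | p.2 ≤ c p.1 + r} :=
      measurableSet_le measurable_snd ((hc.comp continuous_fst).measurable.add_const r)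
    have : {p : ℝ × ℝ | p.1 ∈ Set.Icc 0 a ∧ p.2 ∈ Set.Ioc (c p.1) (c p.1 + r)}
        = {p : ℝ × ℝ | p.1 ∈ Set.Icc 0 a} ∩ ({p : ℝ × ℝ | c p.1 < p.2} ∩ {p : ℝ × ℝ | p.2 ≤ c p.1 + r}) := by
      ext p; simp [Set.mem_Ioc, and_assoc]
    rw [this]; exact h1.inter (h2.inter h3)
  rw [Measure.volume_eq_prod, Measure.prod_apply hA]
  have : ∫⁻ x, volume (Prod.mk x ⁻¹' {p : ℝ × ℝ | p.1 ∈ Set.Icc 0 a ∧ p.2 ∈ Set.Ioc (c p.1) (c p.1 + r)}) ∂volume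
      = ∫⁻ x, (Set.Icc (0:ℝ) a).indicator (fun _ => ENNReal.ofReal r) x ∂volume := by
    refine lintegral_congr fun x => ?_
    by_cases hx : x ∈ Set.Icc (0:ℝ) a
    · have : Prod.mk x ⁻¹' {p : ℝ × ℝ | p.1 ∈ Set.Icc 0 a ∧ p.2 ∈ Set.Ioc (c p.1) (c p.1 + r)}
          = Set.Ioc (c x) (c x + r) := by
        ext y
        simp only [Set.mem_preimage, Set.mem_setOf_eq, Set.mem_Ioc]
        exact ⟨fun h => h.2, fun h => ⟨hx, h⟩⟩
      rw [this, Real.volume_Ioc, Set.indicator_of_mem hx]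
      congr 1; ring
    · have : Prod.mk x ⁻¹' {p : ℝ × ℝ | p.1 ∈ Set.Icc 0 a ∧ p.2 ∈ Set.Ioc (c p.1) (c p.1 + r)}
          = (∅ : Set ℝ) := by
        ext y
        simp only [Set.mem_preimage, Set.mem_setOf_eq, Set.mem_empty_iff_false, iff_false]
        exact fun h => hx h.1
      rw [this, Set.indicator_of_notMem hx]; simp
  rw [this, lintegral_indicator measurableSet_Icc _, setLIntegral_const, Real.volume_Icc]
  rw [sub_zero, mul_comm]

lemma regionA_meas (c : ℝ → ℝ) (hc : Continuous c) (a r : ℝ) :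
    MeasurableSet {p : ℝ × ℝ | p.1 ∈ Set.Icc 0 a ∧ p.2 ∈ Set.Ioc (c p.1) (c p.1 + r)} := by
  have h1 : MeasurableSet {p : ℝ × ℝ | p.1 ∈ Set.Icc 0 a} :=
    measurableSet_Icc.preimage measurable_fst
  have h2 : MeasurableSet {p : ℝ × ℝ | c p.1 < p.2} :=
    measurableSet_lt (hc.comp continuous_fst).measurable measurable_snd
  have h3 : MeasurableSet {p : ℝ × ℝ | p.2 ≤ c p.1 + r} :=
    measurableSet_le measurable_snd ((hc.comp continuous_fst).measurable.add_const r)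
  have : {p : ℝ × ℝ | p.1 ∈ Set.Icc 0 a ∧ p.2 ∈ Set.Ioc (c p.1) (c p.1 + r)}
      = {p : ℝ × ℝ | p.1 ∈ Set.Icc 0 a} ∩ ({p : ℝ × ℝ | c p.1 < p.2} ∩ {p : ℝ × ℝ | p.2 ≤ c p.1 + r}) := by
    ext p; simp [Set.mem_Ioc, and_assoc]
  rw [this]; exact h1.inter (h2.inter h3)

lemma key (Tmax Xmin Xmax G : ℝ) (hXX : Xmin ≤ Xmax) (hG : 0 ≤ G)
    (Td : Set ℝ)
    (F : Measure (ℝ × ℝ))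
    (hFle : ∀ B : Set (ℝ × ℝ), MeasurableSet B → F B ≤ ENNReal.ofReal G * volume B)
    (z w : ℝ → ℝ) (hz : Continuous z) (a b : ℝ) (ha : a ∈ Set.Icc 0 Tmax)
    (δ η : ℝ) (hδ0 : 0 ≤ δ) (hη0 : 0 ≤ η)
    (hδ : ∀ τ ∈ Set.Icc 0 a, |z τ - w τ| ≤ δ) (hη : |z a - w b| ≤ η) :
    F (Sset Td (Set.Icc Xmin Xmax) z a) ≤ F (Sset Td (Set.Icc Xmin Xmax) w b)
      + ENNReal.ofReal (G * ((Xmax - Xmin) * |a - b|))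
      + ENNReal.ofReal (G * (Tmax * (η + δ))) := by
  set A := {p : ℝ × ℝ | p.1 ∈ Set.Icc 0 a ∧ p.2 ∈ Set.Ioc (z a - z p.1) (z a - z p.1 + (η + δ))}
    with hAdef
  set B := (Set.Ioc b a ×ˢ Set.Icc Xmin Xmax : Set (ℝ × ℝ)) with hBdef
  have hsub : Sset Td (Set.Icc Xmin Xmax) z a ⊆ Sset Td (Set.Icc Xmin Xmax) w b ∪ (B ∪ A) := by
    intro p hp
    obtain ⟨⟨hp1a, hp1d⟩, hp2⟩ := hp
    by_cases hpb : p ∈ Sset Td (Set.Icc Xmin Xmax) w b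
    · exact Or.inl hpb
    right
    by_cases h1b : p.1 ∈ Set.Icc 0 b
    · right
      refine ⟨hp1a, hp2.1, ?_⟩
      have hle : p.2 ≤ w b - w p.1 := by
        by_contra hlt
        push_neg at hlt
        exact hpb ⟨⟨h1b, hp1d⟩, hlt, hp2.2⟩
      have h1 := abs_le.1 hη
      have h2 := abs_le.1 (hδ p.1 hp1a)
      linarith [h1.1, h1.2, h2.1, h2.2]
    · left
      refine ⟨⟨?_, hp1a.2⟩, hp2.2⟩
      rcases Set.mem_Icc.1 hp1a with ⟨h0, _⟩
      by_contra hble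
      push_neg at hble
      exact h1b ⟨h0, by linarith⟩
  have hmono := measure_mono (μ := F) hsub
  have hcut : F (Sset Td (Set.Icc Xmin Xmax) w b ∪ (B ∪ A))
      ≤ F (Sset Td (Set.Icc Xmin Xmax) w b) + (F B + F A) :=
    le_trans (measure_union_le _ _) (by gcongr; exact measure_union_le _ _)
  have hB : F B ≤ ENNReal.ofReal (G * ((Xmax - Xmin) * |a - b|)) := by
    refine le_trans (hFle B (measurableSet_Ioc.prod measurableSet_Icc)) ?_
    rw [hBdef, strip_vol]
    calc ENNReal.ofReal G * (ENNReal.ofReal (a - b) * ENNReal.ofReal (Xmax - Xmin))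
        ≤ ENNReal.ofReal G * (ENNReal.ofReal |a - b| * ENNReal.ofReal (Xmax - Xmin)) := by
          gcongr
          exact le_abs_self _
      _ = ENNReal.ofReal (G * ((Xmax - Xmin) * |a - b|)) := by
          rw [← ENNReal.ofReal_mul (abs_nonneg _), ← ENNReal.ofReal_mul hG]
          ring_nf
  have hA : F A ≤ ENNReal.ofReal (G * (Tmax * (η + δ))) := by
    refine le_trans (hFle A (regionA_meas (fun τ => z a - z τ) (by fun_prop) a (η + δ))) ?_
    rw [hAdef, regionA_vol (fun τ => z a - z τ) (by fun_prop) a (η + δ) (by linarith)]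
    calc ENNReal.ofReal G * (ENNReal.ofReal a * ENNReal.ofReal (η + δ))
        ≤ ENNReal.ofReal G * (ENNReal.ofReal Tmax * ENNReal.ofReal (η + δ)) := by
          gcongr
          exact ha.2
      _ = ENNReal.ofReal (G * (Tmax * (η + δ))) := by
          rw [← ENNReal.ofReal_mul (le_trans ha.1 ha.2), ← ENNReal.ofReal_mul hG]
  calc F (Sset Td (Set.Icc Xmin Xmax) z a)
      ≤ F (Sset Td (Set.Icc Xmin Xmax) w b) + (F B + F A) := le_trans hmono hcut
    _ ≤ F (Sset Td (Set.Icc Xmin Xmax) w b)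
        + ENNReal.ofReal (G * ((Xmax - Xmin) * |a - b|))
        + ENNReal.ofReal (G * (Tmax * (η + δ))) := by
        rw [add_assoc]
        gcongr

lemma keyR (Tmax Xmin Xmax G : ℝ) (hXX : Xmin ≤ Xmax) (hG : 0 ≤ G)
    (Td : Set ℝ)
    (F : Measure (ℝ × ℝ)) [IsProbabilityMeasure F]
    (hFle : ∀ B : Set (ℝ × ℝ), MeasurableSet B → F B ≤ ENNReal.ofReal G * volume B)
    (z w : ℝ → ℝ) (hz : Continuous z) (hw : Continuous w)
    (a b : ℝ) (ha : a ∈ Set.Icc 0 Tmax) (hb : b ∈ Set.Icc 0 Tmax)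
    (δ η : ℝ) (hδ0 : 0 ≤ δ) (hη0 : 0 ≤ η)
    (hδa : ∀ τ ∈ Set.Icc 0 a, |z τ - w τ| ≤ δ)
    (hδb : ∀ τ ∈ Set.Icc 0 b, |z τ - w τ| ≤ δ)
    (hη : |z a - w b| ≤ η) :
    |(F (Sset Td (Set.Icc Xmin Xmax) z a)).toReal - (F (Sset Td (Set.Icc Xmin Xmax) w b)).toReal|
      ≤ G * ((Xmax - Xmin) * |a - b|) + G * (Tmax * (η + δ)) := by
  have hT0 : (0:ℝ) ≤ Tmax := le_trans ha.1 ha.2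
  set C1 := G * ((Xmax - Xmin) * |a - b|) with hC1
  set C2 := G * (Tmax * (η + δ)) with hC2
  have hC10 : 0 ≤ C1 := mul_nonneg hG (mul_nonneg (by linarith) (abs_nonneg _))
  have hC20 : 0 ≤ C2 := mul_nonneg hG (mul_nonneg hT0 (by linarith))
  have h1 := key Tmax Xmin Xmax G hXX hG Td F hFle z w hz a b ha δ η hδ0 hη0 hδa hη
  have h2 := key Tmax Xmin Xmax G hXX hG Td F hFle w z hw b a hb δ η hδ0 hη0
    (fun τ hτ => by rw [abs_sub_comm]; exact hδb τ hτ) (by rwa [abs_sub_comm])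
  rw [abs_sub_comm b a] at h2
  have toreal : ∀ (x y : ENNReal) (c1 c2 : ℝ), 0 ≤ c1 → 0 ≤ c2 → y ≠ ⊤ →
      x ≤ y + ENNReal.ofReal c1 + ENNReal.ofReal c2 → x.toReal ≤ y.toReal + c1 + c2 := by
    intro x y c1 c2 hc1 hc2 hy h
    have hne : y + ENNReal.ofReal c1 + ENNReal.ofReal c2 ≠ ⊤ := by finiteness
    have := ENNReal.toReal_mono hne h
    rwa [ENNReal.toReal_add (by finiteness) (by finiteness),
      ENNReal.toReal_add hy (by finiteness), ENNReal.toReal_ofReal hc1,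
      ENNReal.toReal_ofReal hc2] at this
  have t1 := toreal _ _ _ _ hC10 hC20 (measure_ne_top F _) h1
  have t2 := toreal _ _ _ _ hC10 hC20 (measure_ne_top F _) h2
  rw [abs_sub_le_iff]
  constructor <;> linarith

lemma gcont (Tmax Xmin Xmax G : ℝ) (hXX : Xmin ≤ Xmax) (hG : 0 ≤ G)
    (Td : Set ℝ)
    (F : Measure (ℝ × ℝ)) [IsProbabilityMeasure F]
    (hFle : ∀ B : Set (ℝ × ℝ), MeasurableSet B → F B ≤ ENNReal.ofReal G * volume B)
    (z : ℝ → ℝ) (hz : Continuous z) :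
    ContinuousOn (fun s => (F (Sset Td (Set.Icc Xmin Xmax) z s)).toReal)
      (Set.Icc 0 Tmax) := by
  intro b hb
  set g := fun s => (F (Sset Td (Set.Icc Xmin Xmax) z s)).toReal with hgdef
  have bound : ∀ a ∈ Set.Icc (0:ℝ) Tmax,
      |g a - g b| ≤ G * ((Xmax - Xmin) * |a - b|) + G * (Tmax * (|z a - z b| + 0)) := by
    intro a ha
    exact keyR Tmax Xmin Xmax G hXX hG Td F hFle z z hz hz a b ha hb 0 (|z a - z b|)
      le_rfl (abs_nonneg _) (fun τ _ => by simp) (fun τ _ => by simp) le_rfl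
  rw [ContinuousWithinAt, tendsto_iff_dist_tendsto_zero]
  have hle : ∀ᶠ a in nhdsWithin b (Set.Icc 0 Tmax),
      dist (g a) (g b) ≤ G * ((Xmax - Xmin) * |a - b|) + G * (Tmax * (|z a - z b| + 0)) := by
    filter_upwards [self_mem_nhdsWithin] with a ha
    rw [Real.dist_eq]
    exact bound a ha
  have hc : Continuous (fun a => G * ((Xmax - Xmin) * |a - b|) + G * (Tmax * (|z a - z b| + 0))) := by
    fun_prop
  have hb0 : G * ((Xmax - Xmin) * |b - b|) + G * (Tmax * (|z b - z b| + 0)) = 0 := by simp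
  have htend := (hc.tendsto b).mono_left (nhdsWithin_le_nhds (s := Set.Icc 0 Tmax))
  rw [hb0] at htend
  exact squeeze_zero' (Eventually.of_forall fun _ => dist_nonneg) hle htend

end CTD

/-- Proposition 2: existence and uniqueness of the characteristic
travel distance. For every in-flow measure `F ∈ 𝒫_{m,G}` and every Lipschitz
continuous speed function `V : [0,∞) → (0,∞)`, there is a unique `z_F ∈ C(𝒯)` with
`z_F(t) = ∫₀ᵗ V(F(S_s(z_F))) ds` for all `t ∈ 𝒯`. -/
theorem exists_unique_characteristic_travel_distance
    (Tmax Xmin Xmax G : ℝ) (hT : 0 < Tmax) (hXmin : 0 < Xmin) (hXX : Xmin < Xmax)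
    (hG : 0 < G)
    (Td Ta : Set ℝ) (hTdc : IsCompact Td) (hTd : Td ⊆ Set.Icc 0 Tmax)
    (hTac : IsCompact Ta) (hTa : Ta ⊆ Set.Icc 0 Tmax)
    (m : Measure (ℝ × ℝ)) (hm : IsProbabilityMeasure m)
    (V : ℝ → ℝ) (LV : NNReal) (hV : LipschitzOnWith LV V (Set.Ici 0))
    (hVpos : ∀ c : ℝ, 0 ≤ c → 0 < V c)
    (F : Measure (ℝ × ℝ)) (hF : memP Td (Set.Icc Xmin Xmax) Ta m G F) :
    ∃ z : ℝ → ℝ, Continuous z ∧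
      (∀ t ∈ Set.Icc (0:ℝ) Tmax, z t = Umap Td (Set.Icc Xmin Xmax) V F z t) ∧
      ∀ z' : ℝ → ℝ, Continuous z' →
        (∀ t ∈ Set.Icc (0:ℝ) Tmax, z' t = Umap Td (Set.Icc Xmin Xmax) V F z' t) →
        ∀ t ∈ Set.Icc (0:ℝ) Tmax, z' t = z t := by
  classical
  obtain ⟨hFprob, hFsupp, hFle, hFmarg⟩ := hF
  haveI := hFprob
  have hXX' : Xmin ≤ Xmax := hXX.le
  have hG' : (0:ℝ) ≤ G := hG.le
  set X := Set.Icc Xmin Xmax with hXdef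
  have h0T : (0:ℝ) ∈ Set.Icc (0:ℝ) Tmax := Set.left_mem_Icc.2 hT.le
  have hTT : Tmax ∈ Set.Icc (0:ℝ) Tmax := Set.right_mem_Icc.2 hT.le
  -- extension operator
  set ez : C(Set.Icc (0:ℝ) Tmax, ℝ) → ℝ → ℝ :=
    fun zc t => zc (Set.projIcc 0 Tmax hT.le t) with hezdef
  have hezc : ∀ zc, Continuous (ez zc) := fun zc => zc.continuous.comp continuous_projIcc
  have hezeq : ∀ zc t, ∀ ht : t ∈ Set.Icc (0:ℝ) Tmax, ez zc t = zc ⟨t, ht⟩ := by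
    intro zc t ht
    simp only [hezdef, Set.projIcc_of_mem hT.le ht]
  -- integrand
  set g : C(Set.Icc (0:ℝ) Tmax, ℝ) → ℝ → ℝ :=
    fun zc s => (F (Sset Td X (ez zc) s)).toReal with hgdef
  have hg0 : ∀ zc s, 0 ≤ g zc s := fun zc s => ENNReal.toReal_nonneg
  have hgc : ∀ zc, ContinuousOn (g zc) (Set.Icc 0 Tmax) := fun zc =>
    CTD.gcont Tmax Xmin Xmax G hXX' hG' Td F hFle (ez zc) (hezc zc)
  have hfc : ∀ zc, ContinuousOn (fun s => V (g zc s)) (Set.Icc 0 Tmax) := fun zc =>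
    hV.continuousOn.comp (hgc zc) (fun s _ => hg0 zc s)
  have hint : ∀ zc (a b : ℝ), a ∈ Set.Icc (0:ℝ) Tmax → b ∈ Set.Icc (0:ℝ) Tmax →
      IntervalIntegrable (fun s => V (g zc s)) volume a b := fun zc a b ha hb =>
    ((hfc zc).mono (Set.uIcc_subset_Icc ha hb)).intervalIntegrable
  -- the Picard map Φ
  have hUc : ∀ zc, ContinuousOn (fun t => Umap Td X V F (ez zc) t) (Set.Icc 0 Tmax) := by
    intro zc
    have := intervalIntegral.continuousOn_primitive_interval'
      (hint zc 0 Tmax h0T hTT) Set.left_mem_uIcc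
    rw [Set.uIcc_of_le hT.le] at this
    exact this
  set Φ : C(Set.Icc (0:ℝ) Tmax, ℝ) → C(Set.Icc (0:ℝ) Tmax, ℝ) := fun zc =>
    ⟨(Set.Icc (0:ℝ) Tmax).restrict (Umap Td X V F (ez zc)), (hUc zc).restrict⟩ with hΦdef
  have hΦapp : ∀ zc (x : Set.Icc (0:ℝ) Tmax), Φ zc x = Umap Td X V F (ez zc) x.1 :=
    fun _ _ => rfl
  -- the contraction constant
  set K : ℝ := 2 * (LV : ℝ) * G * Tmax with hKdef
  have hK0 : 0 ≤ K := by positivity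
  -- pointwise Lipschitz-type estimate for the integrand
  have hstep : ∀ (u w : C(Set.Icc (0:ℝ) Tmax, ℝ)) (s : ℝ), s ∈ Set.Icc (0:ℝ) Tmax →
      ∀ δ : ℝ, 0 ≤ δ → (∀ τ ∈ Set.Icc (0:ℝ) s, |ez u τ - ez w τ| ≤ δ) →
      |V (g u s) - V (g w s)| ≤ K * δ := by
    intro u w s hs δ hδ0 hδ
    have hgd : |g u s - g w s| ≤ G * ((Xmax - Xmin) * |s - s|) + G * (Tmax * (δ + δ)) :=
      CTD.keyR Tmax Xmin Xmax G hXX' hG' Td F hFle (ez u) (ez w) (hezc u) (hezc w) s s hs hs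
        δ δ hδ0 hδ0 hδ hδ (hδ s (Set.right_mem_Icc.2 hs.1))
    rw [sub_self, abs_zero, mul_zero, mul_zero, zero_add] at hgd
    have hVd : |V (g u s) - V (g w s)| ≤ (LV : ℝ) * |g u s - g w s| := by
      have := hV.dist_le_mul (g u s) (hg0 u s) (g w s) (hg0 w s)
      rwa [Real.dist_eq, Real.dist_eq] at this
    calc |V (g u s) - V (g w s)| ≤ (LV : ℝ) * |g u s - g w s| := hVd
      _ ≤ (LV : ℝ) * (G * (Tmax * (δ + δ))) := by
          exact mul_le_mul_of_nonneg_left hgd (NNReal.coe_nonneg LV)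
      _ = K * δ := by rw [hKdef]; ring
  -- the iterated Picard estimate
  have main : ∀ n : ℕ, ∀ u w : C(Set.Icc (0:ℝ) Tmax, ℝ), ∀ t : ℝ,
      ∀ ht : t ∈ Set.Icc (0:ℝ) Tmax,
      |(Φ^[n] u) ⟨t, ht⟩ - (Φ^[n] w) ⟨t, ht⟩| ≤ K ^ n * t ^ n / n.factorial * dist u w := by
    intro n
    induction n with
    | zero =>
      intro u w t ht
      have : |u ⟨t, ht⟩ - w ⟨t, ht⟩| ≤ dist u w := by
        rw [← Real.dist_eq]
        exact ContinuousMap.dist_apply_le_dist _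
      simpa using this
    | succ n ih =>
      intro u w t ht
      set d := dist u w with hd
      have hd0 : 0 ≤ d := dist_nonneg
      set u' := Φ^[n] u with hu'
      set w' := Φ^[n] w with hw'
      have htT : t ∈ Set.Icc (0:ℝ) Tmax := ht
      have happu : (Φ^[n+1] u) ⟨t, ht⟩ = ∫ s in (0:ℝ)..t, V (g u' s) := by
        rw [Function.iterate_succ_apply']
        rfl
      have happw : (Φ^[n+1] w) ⟨t, ht⟩ = ∫ s in (0:ℝ)..t, V (g w' s) := by
        rw [Function.iterate_succ_apply']
        rfl
      have hub : ∀ s ∈ Set.Icc (0:ℝ) t,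
          |V (g u' s) - V (g w' s)| ≤ K ^ (n+1) * d / n.factorial * s ^ n := by
        intro s hs
        have hsT : s ∈ Set.Icc (0:ℝ) Tmax := ⟨hs.1, hs.2.trans ht.2⟩
        have hδ : ∀ τ ∈ Set.Icc (0:ℝ) s,
            |ez u' τ - ez w' τ| ≤ K ^ n * s ^ n / n.factorial * d := by
          intro τ hτ
          have hτT : τ ∈ Set.Icc (0:ℝ) Tmax := ⟨hτ.1, hτ.2.trans hsT.2⟩
          rw [hezeq u' τ hτT, hezeq w' τ hτT]
          refine le_trans (ih u w τ hτT) ?_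
          gcongr
          · exact hτ.1
          · exact hτ.2
        have hδ0 : 0 ≤ K ^ n * s ^ n / n.factorial * d := by
          have := hs.1
          positivity
        refine le_trans (hstep u' w' s hsT _ hδ0 hδ) (le_of_eq ?_)
        push_cast
        ring
      have hiu := hint u' 0 t h0T htT
      have hiw := hint w' 0 t h0T htT
      have habs : |∫ s in (0:ℝ)..t, (V (g u' s) - V (g w' s))|
          ≤ ∫ s in (0:ℝ)..t, |V (g u' s) - V (g w' s)| :=
        intervalIntegral.abs_integral_le_integral_abs ht.1
      have hmono : (∫ s in (0:ℝ)..t, |V (g u' s) - V (g w' s)|)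
          ≤ ∫ s in (0:ℝ)..t, K ^ (n+1) * d / n.factorial * s ^ n := by
        refine intervalIntegral.integral_mono_on ht.1 ((hiu.sub hiw).abs) ?_ hub
        exact (continuous_const.mul (continuous_pow n)).intervalIntegrable _ _
      have hval : (∫ s in (0:ℝ)..t, K ^ (n+1) * d / n.factorial * s ^ n)
          = K ^ (n+1) * t ^ (n+1) / (n+1).factorial * d := by
        rw [intervalIntegral.integral_const_mul, integral_pow, Nat.factorial_succ]
        push_cast
        rw [zero_pow (Nat.succ_ne_zero n)]
        have h1 : ((n.factorial : ℝ)) ≠ 0 := by positivity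
        have h2 : ((n : ℝ) + 1) ≠ 0 := by positivity
        field_simp
        ring
      calc |(Φ^[n+1] u) ⟨t, ht⟩ - (Φ^[n+1] w) ⟨t, ht⟩|
          = |∫ s in (0:ℝ)..t, (V (g u' s) - V (g w' s))| := by
            rw [happu, happw, ← intervalIntegral.integral_sub hiu hiw]
        _ ≤ ∫ s in (0:ℝ)..t, |V (g u' s) - V (g w' s)| := habs
        _ ≤ ∫ s in (0:ℝ)..t, K ^ (n+1) * d / n.factorial * s ^ n := hmono
        _ = K ^ (n+1) * t ^ (n+1) / (n+1).factorial * d := hval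
  -- distance estimate for iterates
  have distΦ : ∀ n : ℕ, ∀ u w : C(Set.Icc (0:ℝ) Tmax, ℝ),
      dist (Φ^[n] u) (Φ^[n] w) ≤ (K * Tmax) ^ n / n.factorial * dist u w := by
    intro n u w
    have h0 : 0 ≤ (K * Tmax) ^ n / n.factorial * dist u w := by positivity
    rw [ContinuousMap.dist_le h0]
    intro x
    rw [Real.dist_eq]
    refine le_trans (main n u w x.1 x.2) ?_
    rw [mul_pow K Tmax n]
    gcongr
    · exact x.2.1
    · exact x.2.2
  -- choose n with contraction constant < 1
  obtain ⟨n, hn⟩ := ((FloorSemiring.tendsto_pow_div_factorial_atTop (K * Tmax)).eventually_lt_const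
    one_pos).exists
  set C : ℝ := (K * Tmax) ^ n / n.factorial with hCdef
  have hC0 : 0 ≤ C := by positivity
  haveI : Nonempty C(Set.Icc (0:ℝ) Tmax, ℝ) := ⟨0⟩
  have hcontr : ContractingWith C.toNNReal (Φ^[n]) := by
    constructor
    · have : (C.toNNReal : ℝ) < ((1 : NNReal) : ℝ) := by
        rw [Real.coe_toNNReal _ hC0]
        simpa using hn
      exact_mod_cast this
    · refine LipschitzWith.of_dist_le_mul fun u w => ?_
      rw [Real.coe_toNNReal _ hC0]
      exact distΦ n u w
  set zfix := ContractingWith.fixedPoint (Φ^[n]) hcontr with hzfixdef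
  have hfix : Function.IsFixedPt Φ zfix := hcontr.isFixedPt_fixedPoint_iterate
  -- equality of Umap for functions agreeing on [0, Tmax]
  have hUcongr : ∀ (z₁ z₂ : ℝ → ℝ), (∀ s ∈ Set.Icc (0:ℝ) Tmax, z₁ s = z₂ s) →
      ∀ t ∈ Set.Icc (0:ℝ) Tmax, Umap Td X V F z₁ t = Umap Td X V F z₂ t := by
    intro z₁ z₂ hz12 t ht
    refine intervalIntegral.integral_congr fun s hs => ?_
    rw [Set.uIcc_of_le ht.1] at hs
    have hsT : s ∈ Set.Icc (0:ℝ) Tmax := ⟨hs.1, hs.2.trans ht.2⟩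
    have hSeq : Sset Td X z₁ s = Sset Td X z₂ s := by
      ext p
      simp only [Sset, Set.mem_setOf_eq, Set.mem_inter_iff, Set.mem_Ioi, Set.mem_Icc]
      constructor <;> rintro ⟨⟨⟨hp0, hps⟩, hpd⟩, h2, h3⟩ <;>
        refine ⟨⟨⟨hp0, hps⟩, hpd⟩, ?_, h3⟩
      · rwa [← hz12 s hsT, ← hz12 p.1 ⟨hp0, hps.trans hsT.2⟩]
      · rwa [hz12 s hsT, hz12 p.1 ⟨hp0, hps.trans hsT.2⟩]
    rw [hSeq]
  refine ⟨ez zfix, hezc zfix, ?_, ?_⟩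
  · intro t ht
    have h1 : ez zfix t = zfix ⟨t, ht⟩ := hezeq zfix t ht
    have h2 : zfix ⟨t, ht⟩ = Φ zfix ⟨t, ht⟩ := by rw [hfix.eq]
    rw [h1, h2, hΦapp]
  · intro z' hz' heq' t ht
    set z'c : C(Set.Icc (0:ℝ) Tmax, ℝ) :=
      ⟨fun x => z' x.1, hz'.comp continuous_subtype_val⟩ with hz'cdef
    have hagree : ∀ s ∈ Set.Icc (0:ℝ) Tmax, ez z'c s = z' s := by
      intro s hs
      rw [hezeq z'c s hs]
      rfl
    have hfix' : Function.IsFixedPt Φ z'c := by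
      refine ContinuousMap.ext fun x => ?_
      rw [hΦapp]
      rw [hUcongr (ez z'c) z' hagree x.1 x.2]
      exact (heq' x.1 x.2).symm
    have : z'c = zfix := hcontr.fixedPoint_unique (hfix'.iterate n)
    have h1 : z' t = z'c ⟨t, ht⟩ := rfl
    rw [h1, this, ← hezeq zfix t ht]
end
end

section
/- Fix F ∈ 𝒫_{m,G} and a Lipschitz continuous speed function V : [0,∞) → (0,∞). Then for every starting point z₀ ∈ C(𝒯), the Picard sequence defined by z_l := 𝒰(z_{l−1}, F) for l ≥ 1 converges in the uniform norm on C(𝒯) to the unique z* ∈ C(𝒯) satisfying z*(t) = ∫₀ᵗ V(F(S_s(z*))) ds for all t ∈ 𝒯. -/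
open MeasureTheory Set Filter

noncomputable section

namespace PicardAux

lemma strip_meas {f g : ℝ → ℝ} (hf : Continuous f) (hg : Continuous g) (a b : ℝ) :
    MeasurableSet {p : ℝ × ℝ | p.1 ∈ Set.Icc a b ∧ f p.1 < p.2 ∧ p.2 ≤ g p.1} := by
  have h1 : MeasurableSet {p : ℝ × ℝ | p.1 ∈ Set.Icc a b} :=
    measurable_fst measurableSet_Icc
  have h2 : MeasurableSet {p : ℝ × ℝ | f p.1 < p.2} :=
    measurableSet_lt (hf.comp continuous_fst).measurable measurable_snd
  have h3 : MeasurableSet {p : ℝ × ℝ | p.2 ≤ g p.1} :=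
    measurableSet_le measurable_snd (hg.comp continuous_fst).measurable
  have he : {p : ℝ × ℝ | p.1 ∈ Set.Icc a b ∧ f p.1 < p.2 ∧ p.2 ≤ g p.1}
      = {p : ℝ × ℝ | p.1 ∈ Set.Icc a b} ∩ ({p : ℝ × ℝ | f p.1 < p.2} ∩ {p : ℝ × ℝ | p.2 ≤ g p.1}) := by
    ext p; simp only [Set.mem_setOf_eq, Set.mem_inter_iff]
  rw [he]
  exact h1.inter (h2.inter h3)

lemma vol_strip {f g : ℝ → ℝ} (hf : Continuous f) (hg : Continuous g) {a b δ : ℝ}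
    (hδ : ∀ τ ∈ Set.Icc a b, g τ - f τ ≤ δ) :
    volume {p : ℝ × ℝ | p.1 ∈ Set.Icc a b ∧ f p.1 < p.2 ∧ p.2 ≤ g p.1}
      ≤ ENNReal.ofReal (b - a) * ENNReal.ofReal δ := by
  set S := {p : ℝ × ℝ | p.1 ∈ Set.Icc a b ∧ f p.1 < p.2 ∧ p.2 ≤ g p.1} with hSdef
  have hS : MeasurableSet S := strip_meas hf hg a b
  calc volume S = ∫⁻ τ, volume (Prod.mk τ ⁻¹' S) := by
        rw [Measure.volume_eq_prod, Measure.prod_apply hS]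
  _ ≤ ∫⁻ τ, (Set.Icc a b).indicator (fun _ => ENNReal.ofReal δ) τ := by
        apply lintegral_mono
        intro τ
        by_cases hτ : τ ∈ Set.Icc a b
        · have hsub : Prod.mk τ ⁻¹' S ⊆ Set.Ioc (f τ) (g τ) := by
            intro ξ hξ; exact ⟨hξ.2.1, hξ.2.2⟩
          rw [Set.indicator_of_mem hτ]
          calc volume (Prod.mk τ ⁻¹' S) ≤ volume (Set.Ioc (f τ) (g τ)) := measure_mono hsub
          _ = ENNReal.ofReal (g τ - f τ) := Real.volume_Ioc
          _ ≤ ENNReal.ofReal δ := ENNReal.ofReal_le_ofReal (hδ τ hτ)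
        · have hempty : Prod.mk τ ⁻¹' S = ∅ := by
            ext ξ; simp only [Set.mem_preimage, Set.mem_empty_iff_false, iff_false, hSdef,
              Set.mem_setOf_eq]
            intro h; exact hτ h.1
          simp [hempty, Set.indicator_of_notMem hτ]
  _ = ENNReal.ofReal δ * volume (Set.Icc a b) := by
        rw [lintegral_indicator measurableSet_Icc, setLIntegral_const]
  _ = ENNReal.ofReal (b - a) * ENNReal.ofReal δ := by
        rw [Real.volume_Icc, mul_comm]


lemma psi_le {Tmax G : ℝ} {Td Xs : Set ℝ} {F : Measure (ℝ × ℝ)} [IsProbabilityMeasure F]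
    (hFd : ∀ B : Set (ℝ × ℝ), MeasurableSet B → F B ≤ ENNReal.ofReal G * volume B)
    (hG : 0 ≤ G)
    {z w : ℝ → ℝ} (hz : Continuous z) (hw : Continuous w)
    {s δ : ℝ} (hs : s ∈ Set.Icc 0 Tmax) (hδ : 0 ≤ δ)
    (hzw : ∀ τ ∈ Set.Icc 0 s, |z τ - w τ| ≤ δ) :
    (F (Sset Td Xs z s)).toReal ≤ (F (Sset Td Xs w s)).toReal + G * (Tmax * (2 * δ)) := by
  obtain ⟨hs0, hsT⟩ := hs
  set f : ℝ → ℝ := fun τ => z s - z τ with hfdef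
  set g : ℝ → ℝ := fun τ => w s - w τ with hgdef
  set D := {p : ℝ × ℝ | p.1 ∈ Set.Icc 0 s ∧ f p.1 < p.2 ∧ p.2 ≤ g p.1} with hDdef
  have hfc : Continuous f := continuous_const.sub hz
  have hgc : Continuous g := continuous_const.sub hw
  have hsub : Sset Td Xs z s ⊆ Sset Td Xs w s ∪ D := by
    intro p hp
    obtain ⟨⟨hp1, hp1'⟩, hp2, hp2'⟩ := hp
    by_cases hpB : p ∈ Sset Td Xs w s
    · exact Or.inl hpB
    · refine Or.inr ⟨hp1, hp2, ?_⟩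
      by_contra hlt
      push_neg at hlt
      exact hpB ⟨⟨hp1, hp1'⟩, hlt, hp2'⟩
  have hgf : ∀ τ ∈ Set.Icc 0 s, g τ - f τ ≤ 2 * δ := by
    intro τ hτ
    have h1 : |z τ - w τ| ≤ δ := hzw τ hτ
    have h2 : |z s - w s| ≤ δ := hzw s ⟨hs0, le_rfl⟩
    have := abs_le.1 h1
    have := abs_le.1 h2
    simp only [hgdef, hfdef]
    linarith [(abs_le.1 h1).1, (abs_le.1 h1).2, (abs_le.1 h2).1, (abs_le.1 h2).2]
  have hvolD : volume D ≤ ENNReal.ofReal Tmax * ENNReal.ofReal (2 * δ) := by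
    refine le_trans (vol_strip hfc hgc hgf) ?_
    gcongr
    · linarith
  have hkey : F (Sset Td Xs z s) ≤ F (Sset Td Xs w s) + ENNReal.ofReal (G * (Tmax * (2 * δ))) := by
    calc F (Sset Td Xs z s) ≤ F (Sset Td Xs w s ∪ D) := measure_mono hsub
    _ ≤ F (Sset Td Xs w s) + F D := measure_union_le _ _
    _ ≤ F (Sset Td Xs w s) + ENNReal.ofReal G * volume D := by
        gcongr
        exact hFd D (strip_meas hfc hgc 0 s)
    _ ≤ F (Sset Td Xs w s) + ENNReal.ofReal G * (ENNReal.ofReal Tmax * ENNReal.ofReal (2 * δ)) := by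
        gcongr
    _ = F (Sset Td Xs w s) + ENNReal.ofReal (G * (Tmax * (2 * δ))) := by
        rw [← ENNReal.ofReal_mul (by linarith : (0:ℝ) ≤ Tmax), ← ENNReal.ofReal_mul hG]
  have hne1 : F (Sset Td Xs z s) ≠ ⊤ := measure_ne_top F _
  have hne2 : F (Sset Td Xs w s) + ENNReal.ofReal (G * (Tmax * (2 * δ))) ≠ ⊤ :=
    ENNReal.add_ne_top.2 ⟨measure_ne_top F _, ENNReal.ofReal_ne_top⟩
  have := (ENNReal.toReal_le_toReal hne1 hne2).2 hkey
  rwa [ENNReal.toReal_add (measure_ne_top F _) ENNReal.ofReal_ne_top,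
    ENNReal.toReal_ofReal (mul_nonneg hG (mul_nonneg (by linarith) (by linarith)))] at this

lemma integrand_diff {Tmax G : ℝ} {Td Xs : Set ℝ} {F : Measure (ℝ × ℝ)} [IsProbabilityMeasure F]
    (hFd : ∀ B : Set (ℝ × ℝ), MeasurableSet B → F B ≤ ENNReal.ofReal G * volume B)
    {V : ℝ → ℝ} {LV : NNReal} (hV : LipschitzOnWith LV V (Set.Ici 0))
    (hG : 0 ≤ G)
    {z w : ℝ → ℝ} (hz : Continuous z) (hw : Continuous w)
    {s δ : ℝ} (hs : s ∈ Set.Icc 0 Tmax) (hδ : 0 ≤ δ)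
    (hzw : ∀ τ ∈ Set.Icc 0 s, |z τ - w τ| ≤ δ) :
    |V ((F (Sset Td Xs z s)).toReal) - V ((F (Sset Td Xs w s)).toReal)|
      ≤ ((LV : ℝ) * (2 * G * Tmax)) * δ := by
  set a := (F (Sset Td Xs z s)).toReal with ha
  set b := (F (Sset Td Xs w s)).toReal with hb
  have h1 : a ≤ b + G * (Tmax * (2 * δ)) := psi_le hFd hG hz hw hs hδ hzw
  have h2 : b ≤ a + G * (Tmax * (2 * δ)) := by
    refine psi_le hFd hG hw hz hs hδ ?_
    intro τ hτ
    rw [abs_sub_comm]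
    exact hzw τ hτ
  have hab : |a - b| ≤ G * (Tmax * (2 * δ)) := abs_sub_le_iff.2 ⟨by linarith, by linarith⟩
  have hd : dist (V a) (V b) ≤ (LV : ℝ) * dist a b :=
    hV.dist_le_mul a ENNReal.toReal_nonneg b ENNReal.toReal_nonneg
  rw [Real.dist_eq, Real.dist_eq] at hd
  calc |V a - V b| ≤ (LV : ℝ) * |a - b| := hd
  _ ≤ (LV : ℝ) * (G * (Tmax * (2 * δ))) := by
      gcongr
  _ = ((LV : ℝ) * (2 * G * Tmax)) * δ := by ring


lemma psi_continuous {Xmin Xmax G : ℝ} {Td : Set ℝ} {F : Measure (ℝ × ℝ)}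
    [IsProbabilityMeasure F]
    (hFd : ∀ B : Set (ℝ × ℝ), MeasurableSet B → F B ≤ ENNReal.ofReal G * volume B)
    (hG : 0 ≤ G) (hXm : Xmin ≤ Xmax)
    {z : ℝ → ℝ} (hz : Continuous z) :
    Continuous fun s => (F (Sset Td (Set.Icc Xmin Xmax) z s)).toReal := by
  set ψ : ℝ → ℝ := fun s => (F (Sset Td (Set.Icc Xmin Xmax) z s)).toReal with hψ
  -- one-sided estimates
  have h1 : ∀ s' s : ℝ, s' ≤ s →
      ψ s ≤ ψ s' + (G * ((s - s') * (Xmax - Xmin)) + G * (max s 0 * |z s - z s'|)) := by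
    intro s' s hss
    set P := Set.Ioc s' s ×ˢ Set.Icc Xmin Xmax with hPdef
    set f : ℝ → ℝ := fun τ => z s - z τ with hfdef
    set g : ℝ → ℝ := fun τ => z s' - z τ with hgdef
    set D := {p : ℝ × ℝ | p.1 ∈ Set.Icc 0 s' ∧ f p.1 < p.2 ∧ p.2 ≤ g p.1} with hDdef
    have hfc : Continuous f := continuous_const.sub hz
    have hgc : Continuous g := continuous_const.sub hz
    have hsub : Sset Td (Set.Icc Xmin Xmax) z s ⊆ Sset Td (Set.Icc Xmin Xmax) z s' ∪ (P ∪ D) := by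
      intro p hp
      obtain ⟨⟨hp1, hp1'⟩, hp2, hp2'⟩ := hp
      by_cases hps' : p.1 ≤ s'
      · by_cases hpB : p ∈ Sset Td (Set.Icc Xmin Xmax) z s'
        · exact Or.inl hpB
        · refine Or.inr (Or.inr ⟨⟨hp1.1, hps'⟩, hp2, ?_⟩)
          by_contra hlt
          push_neg at hlt
          exact hpB ⟨⟨⟨hp1.1, hps'⟩, hp1'⟩, hlt, hp2'⟩
      · push_neg at hps'
        exact Or.inr (Or.inl ⟨⟨hps', hp1.2⟩, hp2'⟩)
    have hvolP : volume P = ENNReal.ofReal (s - s') * ENNReal.ofReal (Xmax - Xmin) := by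
      rw [hPdef, Measure.volume_eq_prod, Measure.prod_prod, Real.volume_Ioc, Real.volume_Icc]
    have hgf : ∀ τ ∈ Set.Icc 0 s', g τ - f τ ≤ |z s - z s'| := by
      intro τ _
      simp only [hgdef, hfdef]
      rw [abs_sub_comm]
      calc z s' - z τ - (z s - z τ) = z s' - z s := by ring
      _ ≤ |z s' - z s| := le_abs_self _
    have hvolD : volume D ≤ ENNReal.ofReal (max s 0) * ENNReal.ofReal (|z s - z s'|) := by
      refine le_trans (vol_strip hfc hgc hgf) ?_
      gcongr
      · simp only [sub_zero]
        exact le_trans hss (le_max_left _ _)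
    have hkey : F (Sset Td (Set.Icc Xmin Xmax) z s) ≤ F (Sset Td (Set.Icc Xmin Xmax) z s')
        + (ENNReal.ofReal (G * ((s - s') * (Xmax - Xmin)))
          + ENNReal.ofReal (G * (max s 0 * |z s - z s'|))) := by
      calc F (Sset Td (Set.Icc Xmin Xmax) z s)
          ≤ F (Sset Td (Set.Icc Xmin Xmax) z s' ∪ (P ∪ D)) := measure_mono hsub
      _ ≤ F (Sset Td (Set.Icc Xmin Xmax) z s') + F (P ∪ D) := measure_union_le _ _
      _ ≤ F (Sset Td (Set.Icc Xmin Xmax) z s') + (F P + F D) := by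
          gcongr
          exact measure_union_le _ _
      _ ≤ F (Sset Td (Set.Icc Xmin Xmax) z s')
          + (ENNReal.ofReal (G * ((s - s') * (Xmax - Xmin)))
            + ENNReal.ofReal (G * (max s 0 * |z s - z s'|))) := by
          gcongr
          · refine le_trans (hFd P (measurableSet_Ioc.prod measurableSet_Icc)) ?_
            rw [hvolP, ENNReal.ofReal_mul hG,
              ENNReal.ofReal_mul (show (0:ℝ) ≤ s - s' by linarith)]
          · refine le_trans (hFd D (strip_meas hfc hgc 0 s')) ?_
            calc ENNReal.ofReal G * volume D
                ≤ ENNReal.ofReal G * (ENNReal.ofReal (max s 0) * ENNReal.ofReal (|z s - z s'|)) := by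
                  gcongr
            _ = ENNReal.ofReal (G * (max s 0 * |z s - z s'|)) := by
                  rw [← ENNReal.ofReal_mul (le_max_right s 0), ← ENNReal.ofReal_mul hG]
    have hne2 : F (Sset Td (Set.Icc Xmin Xmax) z s')
        + (ENNReal.ofReal (G * ((s - s') * (Xmax - Xmin)))
          + ENNReal.ofReal (G * (max s 0 * |z s - z s'|))) ≠ ⊤ :=
      ENNReal.add_ne_top.2 ⟨measure_ne_top F _,
        ENNReal.add_ne_top.2 ⟨ENNReal.ofReal_ne_top, ENNReal.ofReal_ne_top⟩⟩
    have := (ENNReal.toReal_le_toReal (measure_ne_top F _) hne2).2 hkey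
    rwa [ENNReal.toReal_add (measure_ne_top F _)
        (ENNReal.add_ne_top.2 ⟨ENNReal.ofReal_ne_top, ENNReal.ofReal_ne_top⟩),
      ENNReal.toReal_add ENNReal.ofReal_ne_top ENNReal.ofReal_ne_top,
      ENNReal.toReal_ofReal (mul_nonneg hG (mul_nonneg (by linarith) (by linarith))),
      ENNReal.toReal_ofReal (mul_nonneg hG (mul_nonneg (le_max_right s 0) (abs_nonneg _)))] at this
  have h2 : ∀ s' s : ℝ, s' ≤ s → ψ s' ≤ ψ s + G * (max s 0 * |z s - z s'|) := by
    intro s' s hss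
    set f : ℝ → ℝ := fun τ => z s' - z τ with hfdef
    set g : ℝ → ℝ := fun τ => z s - z τ with hgdef
    set D := {p : ℝ × ℝ | p.1 ∈ Set.Icc 0 s' ∧ f p.1 < p.2 ∧ p.2 ≤ g p.1} with hDdef
    have hfc : Continuous f := continuous_const.sub hz
    have hgc : Continuous g := continuous_const.sub hz
    have hsub : Sset Td (Set.Icc Xmin Xmax) z s' ⊆ Sset Td (Set.Icc Xmin Xmax) z s ∪ D := by
      intro p hp
      obtain ⟨⟨hp1, hp1'⟩, hp2, hp2'⟩ := hp
      by_cases hpB : p ∈ Sset Td (Set.Icc Xmin Xmax) z s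
      · exact Or.inl hpB
      · refine Or.inr ⟨hp1, hp2, ?_⟩
        by_contra hlt
        push_neg at hlt
        exact hpB ⟨⟨⟨hp1.1, le_trans hp1.2 hss⟩, hp1'⟩, hlt, hp2'⟩
    have hgf : ∀ τ ∈ Set.Icc 0 s', g τ - f τ ≤ |z s - z s'| := by
      intro τ _
      simp only [hgdef, hfdef]
      calc z s - z τ - (z s' - z τ) = z s - z s' := by ring
      _ ≤ |z s - z s'| := le_abs_self _
    have hvolD : volume D ≤ ENNReal.ofReal (max s 0) * ENNReal.ofReal (|z s - z s'|) := by
      refine le_trans (vol_strip hfc hgc hgf) ?_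
      gcongr
      · simp only [sub_zero]
        exact le_trans hss (le_max_left _ _)
    have hkey : F (Sset Td (Set.Icc Xmin Xmax) z s') ≤ F (Sset Td (Set.Icc Xmin Xmax) z s)
        + ENNReal.ofReal (G * (max s 0 * |z s - z s'|)) := by
      calc F (Sset Td (Set.Icc Xmin Xmax) z s')
          ≤ F (Sset Td (Set.Icc Xmin Xmax) z s ∪ D) := measure_mono hsub
      _ ≤ F (Sset Td (Set.Icc Xmin Xmax) z s) + F D := measure_union_le _ _
      _ ≤ F (Sset Td (Set.Icc Xmin Xmax) z s) + ENNReal.ofReal (G * (max s 0 * |z s - z s'|)) := by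
          gcongr
          refine le_trans (hFd D (strip_meas hfc hgc 0 s')) ?_
          calc ENNReal.ofReal G * volume D
              ≤ ENNReal.ofReal G * (ENNReal.ofReal (max s 0) * ENNReal.ofReal (|z s - z s'|)) := by
                gcongr
          _ = ENNReal.ofReal (G * (max s 0 * |z s - z s'|)) := by
                rw [← ENNReal.ofReal_mul (le_max_right s 0), ← ENNReal.ofReal_mul hG]
    have hne2 : F (Sset Td (Set.Icc Xmin Xmax) z s)
        + ENNReal.ofReal (G * (max s 0 * |z s - z s'|)) ≠ ⊤ :=
      ENNReal.add_ne_top.2 ⟨measure_ne_top F _, ENNReal.ofReal_ne_top⟩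
    have := (ENNReal.toReal_le_toReal (measure_ne_top F _) hne2).2 hkey
    rwa [ENNReal.toReal_add (measure_ne_top F _) ENNReal.ofReal_ne_top,
      ENNReal.toReal_ofReal (mul_nonneg hG (mul_nonneg (le_max_right s 0) (abs_nonneg _)))] at this
  -- combine into a two-sided bound
  have hbound : ∀ s s0 : ℝ, |ψ s - ψ s0|
      ≤ G * ((Xmax - Xmin) * |s - s0|) + G * (max (max s s0) 0 * |z s - z s0|) := by
    intro s s0
    rcases le_total s0 s with hss | hss
    · have ha := h1 s0 s hss
      have hb := h2 s0 s hss
      have habs : |s - s0| = s - s0 := abs_of_nonneg (by linarith)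
      have hmax : max s 0 ≤ max (max s s0) 0 := max_le_max (le_max_left s s0) le_rfl
      have hm1 : G * (max s 0 * |z s - z s0|) ≤ G * (max (max s s0) 0 * |z s - z s0|) := by
        apply mul_le_mul_of_nonneg_left _ hG
        exact mul_le_mul_of_nonneg_right hmax (abs_nonneg _)
      rw [abs_sub_le_iff]
      constructor
      · calc ψ s - ψ s0 ≤ G * ((s - s0) * (Xmax - Xmin)) + G * (max s 0 * |z s - z s0|) := by
              linarith
        _ ≤ G * ((Xmax - Xmin) * |s - s0|) + G * (max (max s s0) 0 * |z s - z s0|) := by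
              rw [habs]
              rw [mul_comm (s - s0) (Xmax - Xmin)]
              linarith
      · calc ψ s0 - ψ s ≤ G * (max s 0 * |z s - z s0|) := by linarith
        _ ≤ G * ((Xmax - Xmin) * |s - s0|) + G * (max (max s s0) 0 * |z s - z s0|) := by
              have : 0 ≤ G * ((Xmax - Xmin) * |s - s0|) :=
                mul_nonneg hG (mul_nonneg (by linarith) (abs_nonneg _))
              linarith
    · have ha := h1 s s0 hss
      have hb := h2 s s0 hss
      have habs : |s - s0| = s0 - s := by
        rw [abs_sub_comm]; exact abs_of_nonneg (by linarith)
      have habs2 : |z s - z s0| = |z s0 - z s| := abs_sub_comm _ _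
      have hmax : max s0 0 ≤ max (max s s0) 0 := max_le_max (le_max_right s s0) le_rfl
      have hm1 : G * (max s0 0 * |z s0 - z s|) ≤ G * (max (max s s0) 0 * |z s - z s0|) := by
        rw [habs2]
        apply mul_le_mul_of_nonneg_left _ hG
        exact mul_le_mul_of_nonneg_right hmax (abs_nonneg _)
      rw [abs_sub_le_iff]
      constructor
      · calc ψ s - ψ s0 ≤ G * (max s0 0 * |z s0 - z s|) := by linarith
        _ ≤ G * ((Xmax - Xmin) * |s - s0|) + G * (max (max s s0) 0 * |z s - z s0|) := by
              have : 0 ≤ G * ((Xmax - Xmin) * |s - s0|) :=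
                mul_nonneg hG (mul_nonneg (by linarith) (abs_nonneg _))
              linarith
      · calc ψ s0 - ψ s ≤ G * ((s0 - s) * (Xmax - Xmin)) + G * (max s0 0 * |z s0 - z s|) := by
              linarith
        _ ≤ G * ((Xmax - Xmin) * |s - s0|) + G * (max (max s s0) 0 * |z s - z s0|) := by
              rw [habs, mul_comm (s0 - s) (Xmax - Xmin)]
              linarith
  -- conclude continuity by squeezing
  rw [continuous_iff_continuousAt]
  intro s0
  rw [ContinuousAt, tendsto_iff_dist_tendsto_zero]
  have hBc : Tendsto (fun s => G * ((Xmax - Xmin) * |s - s0|)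
      + G * (max (max s s0) 0 * |z s - z s0|)) (nhds s0) (nhds 0) := by
    have hc : Continuous (fun s => G * ((Xmax - Xmin) * |s - s0|)
        + G * (max (max s s0) 0 * |z s - z s0|)) := by
      fun_prop
    have h0 : G * ((Xmax - Xmin) * |s0 - s0|) + G * (max (max s0 s0) 0 * |z s0 - z s0|) = 0 := by
      simp
    simpa [h0] using hc.tendsto s0
  refine squeeze_zero (fun s => dist_nonneg) (fun s => ?_) hBc
  rw [Real.dist_eq]
  exact hbound s s0

lemma integrand_continuous {Xmin Xmax G : ℝ} {Td : Set ℝ} {F : Measure (ℝ × ℝ)}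
    [IsProbabilityMeasure F]
    (hFd : ∀ B : Set (ℝ × ℝ), MeasurableSet B → F B ≤ ENNReal.ofReal G * volume B)
    {V : ℝ → ℝ} {LV : NNReal} (hV : LipschitzOnWith LV V (Set.Ici 0))
    (hG : 0 ≤ G) (hXm : Xmin ≤ Xmax)
    {z : ℝ → ℝ} (hz : Continuous z) :
    Continuous fun s => V ((F (Sset Td (Set.Icc Xmin Xmax) z s)).toReal) :=
  hV.continuousOn.comp_continuous (psi_continuous hFd hG hXm hz)
    (fun _ => ENNReal.toReal_nonneg)

lemma umap_continuous {Xmin Xmax G : ℝ} {Td : Set ℝ} {F : Measure (ℝ × ℝ)}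
    [IsProbabilityMeasure F]
    (hFd : ∀ B : Set (ℝ × ℝ), MeasurableSet B → F B ≤ ENNReal.ofReal G * volume B)
    {V : ℝ → ℝ} {LV : NNReal} (hV : LipschitzOnWith LV V (Set.Ici 0))
    (hG : 0 ≤ G) (hXm : Xmin ≤ Xmax)
    {z : ℝ → ℝ} (hz : Continuous z) :
    Continuous (Umap Td (Set.Icc Xmin Xmax) V F z) := by
  exact intervalIntegral.continuous_primitive
    (fun a b => (integrand_continuous (Td := Td) hFd hV hG hXm hz).intervalIntegrable a b) 0


lemma umap_iter_bound {Td Xs : Set ℝ} {V : ℝ → ℝ} {F : Measure (ℝ × ℝ)}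
    {Tmax K : ℝ} (hK : 0 ≤ K)
    (hKey : ∀ (z w : ℝ → ℝ), Continuous z → Continuous w → ∀ s δ : ℝ,
      s ∈ Set.Icc 0 Tmax → 0 ≤ δ → (∀ τ ∈ Set.Icc 0 s, |z τ - w τ| ≤ δ) →
      |V ((F (Sset Td Xs z s)).toReal) - V ((F (Sset Td Xs w s)).toReal)| ≤ K * δ)
    (hIcont : ∀ z : ℝ → ℝ, Continuous z →
      Continuous (fun s => V ((F (Sset Td Xs z s)).toReal)))
    {z w : ℝ → ℝ} (hz : Continuous z) (hw : Continuous w) {C : ℝ} (hC : 0 ≤ C) (n : ℕ)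
    (hzw : ∀ τ ∈ Set.Icc 0 Tmax, |z τ - w τ| ≤ C * K ^ n * τ ^ n / n.factorial)
    {t : ℝ} (ht : t ∈ Set.Icc 0 Tmax) :
    |Umap Td Xs V F z t - Umap Td Xs V F w t|
      ≤ C * K ^ (n + 1) * t ^ (n + 1) / (n + 1).factorial := by
  obtain ⟨ht0, htT⟩ := ht
  set fz : ℝ → ℝ := fun s => V ((F (Sset Td Xs z s)).toReal) with hfz
  set fw : ℝ → ℝ := fun s => V ((F (Sset Td Xs w s)).toReal) with hfw
  have hfzc : Continuous fz := hIcont z hz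
  have hfwc : Continuous fw := hIcont w hw
  have hsub : Umap Td Xs V F z t - Umap Td Xs V F w t = ∫ s in (0:ℝ)..t, (fz s - fw s) := by
    rw [intervalIntegral.integral_sub (hfzc.intervalIntegrable 0 t) (hfwc.intervalIntegrable 0 t)]
    rfl
  rw [hsub]
  have habs : |∫ s in (0:ℝ)..t, (fz s - fw s)| ≤ ∫ s in (0:ℝ)..t, |fz s - fw s| :=
    intervalIntegral.abs_integral_le_integral_abs ht0
  have hmono : (∫ s in (0:ℝ)..t, |fz s - fw s|)
      ≤ ∫ s in (0:ℝ)..t, K * (C * K ^ n * s ^ n / n.factorial) := by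
    apply intervalIntegral.integral_mono_on ht0
    · exact ((hfzc.sub hfwc).abs).intervalIntegrable 0 t
    · exact (Continuous.intervalIntegrable (by fun_prop) 0 t)
    · intro s hs
      have hsT : s ∈ Set.Icc 0 Tmax := ⟨hs.1, le_trans hs.2 htT⟩
      have hδ : 0 ≤ C * K ^ n * s ^ n / n.factorial :=
        div_nonneg (mul_nonneg (mul_nonneg hC (pow_nonneg hK n)) (pow_nonneg hs.1 n))
          (Nat.cast_nonneg _)
      refine hKey z w hz hw s _ hsT hδ ?_
      intro τ hτ
      refine le_trans (hzw τ ⟨hτ.1, le_trans hτ.2 (le_trans hs.2 htT)⟩) ?_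
      gcongr
      · exact hτ.1
      · exact hτ.2
  have hcalc : (∫ s in (0:ℝ)..t, K * (C * K ^ n * s ^ n / n.factorial))
      = C * K ^ (n + 1) * t ^ (n + 1) / (n + 1).factorial := by
    have heq : (fun s : ℝ => K * (C * K ^ n * s ^ n / n.factorial))
        = fun s : ℝ => (K * (C * K ^ n) / n.factorial) * s ^ n := by
      funext s; ring
    rw [heq, intervalIntegral.integral_const_mul, integral_pow]
    have hfac : ((n + 1).factorial : ℝ) = (n + 1) * n.factorial := by
      rw [Nat.factorial_succ]; push_cast; ring
    have hfacne : (n.factorial : ℝ) ≠ 0 := Nat.cast_ne_zero.2 n.factorial_ne_zero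
    have hn1 : ((n:ℝ) + 1) ≠ 0 := by positivity
    rw [hfac]
    field_simp
    ring
  calc |∫ s in (0:ℝ)..t, (fz s - fw s)| ≤ ∫ s in (0:ℝ)..t, |fz s - fw s| := habs
  _ ≤ ∫ s in (0:ℝ)..t, K * (C * K ^ n * s ^ n / n.factorial) := hmono
  _ = C * K ^ (n + 1) * t ^ (n + 1) / (n + 1).factorial := hcalc

end PicardAux

set_option maxHeartbeats 2000000 in
/-- Corollary 1: Picard iteration. Fix `F ∈ 𝒫_{m,G}` and a Lipschitz
continuous speed function `V : [0,∞) → (0,∞)`. For every starting point `z₀ ∈ C(𝒯)`,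
the sequence `z_l := 𝒰(z_{l−1}, F)` converges uniformly on `𝒯` to the unique
`z* ∈ C(𝒯)` satisfying `z*(t) = ∫₀ᵗ V(F(S_s(z*))) ds` for all `t ∈ 𝒯`. -/
theorem picard_iteration_converges
    (Tmax Xmin Xmax G : ℝ) (hT : 0 < Tmax) (hXmin : 0 < Xmin) (hXX : Xmin < Xmax)
    (hG : 0 < G)
    (Td Ta : Set ℝ) (hTdc : IsCompact Td) (hTd : Td ⊆ Set.Icc 0 Tmax)
    (hTac : IsCompact Ta) (hTa : Ta ⊆ Set.Icc 0 Tmax)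
    (m : Measure (ℝ × ℝ)) (hm : IsProbabilityMeasure m)
    (V : ℝ → ℝ) (LV : NNReal) (hV : LipschitzOnWith LV V (Set.Ici 0))
    (hVpos : ∀ c : ℝ, 0 ≤ c → 0 < V c)
    (F : Measure (ℝ × ℝ)) (hF : memP Td (Set.Icc Xmin Xmax) Ta m G F)
    (z₀ : ℝ → ℝ) (hz₀ : Continuous z₀)
    (zseq : ℕ → ℝ → ℝ) (hzseq0 : zseq 0 = z₀)
    (hzseq : ∀ l : ℕ, zseq (l + 1) = Umap Td (Set.Icc Xmin Xmax) V F (zseq l)) :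
    ∃ zs : ℝ → ℝ, Continuous zs ∧
      (∀ t ∈ Set.Icc (0:ℝ) Tmax, zs t = Umap Td (Set.Icc Xmin Xmax) V F zs t) ∧
      (∀ z' : ℝ → ℝ, Continuous z' →
        (∀ t ∈ Set.Icc (0:ℝ) Tmax, z' t = Umap Td (Set.Icc Xmin Xmax) V F z' t) →
        ∀ t ∈ Set.Icc (0:ℝ) Tmax, z' t = zs t) ∧
      TendstoUniformlyOn (fun l => zseq l) zs Filter.atTop (Set.Icc (0:ℝ) Tmax) := by
  obtain ⟨hP, hsupp, hFd, hmarg⟩ := hF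
  haveI := hP
  have hG0 : (0:ℝ) ≤ G := hG.le
  have hXm : Xmin ≤ Xmax := hXX.le
  set K : ℝ := (LV : ℝ) * (2 * G * Tmax) with hKdef
  have hK0 : 0 ≤ K := by positivity
  have hKey : ∀ (z w : ℝ → ℝ), Continuous z → Continuous w → ∀ s δ : ℝ,
      s ∈ Set.Icc 0 Tmax → 0 ≤ δ → (∀ τ ∈ Set.Icc 0 s, |z τ - w τ| ≤ δ) →
      |V ((F (Sset Td (Set.Icc Xmin Xmax) z s)).toReal)
        - V ((F (Sset Td (Set.Icc Xmin Xmax) w s)).toReal)| ≤ K * δ := by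
    intro z w hzc hwc s δ hs hδ hzw
    exact PicardAux.integrand_diff hFd hV hG0 hzc hwc hs hδ hzw
  have hIcont : ∀ z : ℝ → ℝ, Continuous z →
      Continuous (fun s => V ((F (Sset Td (Set.Icc Xmin Xmax) z s)).toReal)) :=
    fun z hzc => PicardAux.integrand_continuous hFd hV hG0 hXm hzc
  have hcont : ∀ l, Continuous (zseq l) := by
    intro l
    induction l with
    | zero => rw [hzseq0]; exact hz₀
    | succ n ih =>
      rw [hzseq n]
      exact PicardAux.umap_continuous hFd hV hG0 hXm ih
  obtain ⟨C0, hC0⟩ := (isCompact_Icc (a := (0:ℝ)) (b := Tmax)).exists_bound_of_continuousOn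
    ((hcont 1).sub (hcont 0)).continuousOn
  set C : ℝ := max C0 0 with hCdef
  have hC0' : (0:ℝ) ≤ C := le_max_right _ _
  have hCb : ∀ t ∈ Set.Icc (0:ℝ) Tmax, |zseq 1 t - zseq 0 t| ≤ C := by
    intro t ht
    calc |zseq 1 t - zseq 0 t| = ‖zseq 1 t - zseq 0 t‖ := (Real.norm_eq_abs _).symm
    _ ≤ C0 := hC0 t ht
    _ ≤ C := le_max_left _ _
  have hiter : ∀ l, ∀ t ∈ Set.Icc (0:ℝ) Tmax,
      |zseq (l+1) t - zseq l t| ≤ C * K ^ l * t ^ l / l.factorial := by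
    intro l
    induction l with
    | zero => intro t ht; simpa using hCb t ht
    | succ n ih =>
      intro t ht
      rw [hzseq n, hzseq (n+1)]
      exact PicardAux.umap_iter_bound hK0 hKey hIcont (hcont (n+1)) (hcont n) hC0' n ih ht
  set b : ℕ → ℝ := fun l => C * (K * Tmax) ^ l / l.factorial with hbdef
  have hbnn : ∀ l, 0 ≤ b l := fun l => by positivity
  have hb : ∀ l, ∀ t ∈ Set.Icc (0:ℝ) Tmax, |zseq (l+1) t - zseq l t| ≤ b l := by
    intro l t ht
    refine le_trans (hiter l t ht) ?_
    have h1 : C * K ^ l * t ^ l / (l.factorial : ℝ) ≤ C * K ^ l * Tmax ^ l / (l.factorial : ℝ) := by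
      have hCK : 0 ≤ C * K ^ l := mul_nonneg hC0' (pow_nonneg hK0 l)
      have hpow : t ^ l ≤ Tmax ^ l := pow_le_pow_left₀ ht.1 ht.2 l
      have h2 : C * K ^ l * t ^ l ≤ C * K ^ l * Tmax ^ l := mul_le_mul_of_nonneg_left hpow hCK
      have hfp : (0:ℝ) < l.factorial := by positivity
      exact (div_le_div_iff_of_pos_right hfp).2 h2
    refine le_trans h1 (le_of_eq ?_)
    show C * K ^ l * Tmax ^ l / (l.factorial : ℝ) = C * (K * Tmax) ^ l / (l.factorial : ℝ)
    ring
  have hbsum : Summable b := by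
    have h := (Real.summable_pow_div_factorial (K * Tmax)).mul_left C
    simpa [hbdef, mul_div_assoc] using h
  have hdsum_abs : ∀ t ∈ Set.Icc (0:ℝ) Tmax,
      Summable fun l => |zseq (l+1) t - zseq l t| := by
    intro t ht
    exact Summable.of_nonneg_of_le (fun l => abs_nonneg _) (fun l => hb l t ht) hbsum
  have hdsum : ∀ t ∈ Set.Icc (0:ℝ) Tmax, Summable fun l => zseq (l+1) t - zseq l t :=
    fun t ht => (hdsum_abs t ht).of_abs
  set g : ℝ → ℝ := fun t => zseq 0 t + ∑' l, (zseq (l+1) t - zseq l t) with hgdef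
  have hpart : ∀ (l : ℕ) (t : ℝ),
      zseq 0 t + ∑ i ∈ Finset.range l, (zseq (i+1) t - zseq i t) = zseq l t := by
    intro l t
    rw [Finset.sum_range_sub (fun i => zseq i t)]
    ring
  have htendpt : ∀ t ∈ Set.Icc (0:ℝ) Tmax, Tendsto (fun l => zseq l t) atTop (nhds (g t)) := by
    intro t ht
    have h1 := ((hdsum t ht).hasSum.tendsto_sum_nat).const_add (zseq 0 t)
    exact h1.congr (fun l => hpart l t)
  set tail : ℕ → ℝ := fun l => ∑' i, b (i + l) with htaildef
  have htailnn : ∀ l, 0 ≤ tail l := fun l => tsum_nonneg (fun i => hbnn _)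
  have hdist : ∀ (l : ℕ), ∀ t ∈ Set.Icc (0:ℝ) Tmax, |g t - zseq l t| ≤ tail l := by
    intro l t ht
    have hsplit := (hdsum t ht).sum_add_tsum_nat_add l
    have he : g t - zseq l t = ∑' i, (zseq (i + l + 1) t - zseq (i + l) t) := by
      rw [hgdef]
      simp only
      rw [← hpart l t, ← hsplit]
      ring
    rw [he]
    have h1 : Summable fun i => |zseq (i + l + 1) t - zseq (i + l) t| :=
      (summable_nat_add_iff l).2 (hdsum_abs t ht)
    have h2 : Summable fun i => b (i + l) := (summable_nat_add_iff l).2 hbsum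
    calc |∑' i, (zseq (i + l + 1) t - zseq (i + l) t)|
        ≤ ∑' i, |zseq (i + l + 1) t - zseq (i + l) t| := by
          have h1' : Summable fun i => ‖zseq (i + l + 1) t - zseq (i + l) t‖ := by
            simpa only [Real.norm_eq_abs] using h1
          simpa only [Real.norm_eq_abs] using norm_tsum_le_tsum_norm h1'
    _ ≤ ∑' i, b (i + l) := Summable.tsum_le_tsum (fun i => hb (i + l) t ht) h1 h2
  have htail0 : Tendsto tail atTop (nhds 0) := tendsto_sum_nat_add b
  have hunif : TendstoUniformlyOn (fun l => zseq l) g atTop (Set.Icc (0:ℝ) Tmax) := by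
    rw [Metric.tendstoUniformlyOn_iff]
    intro ε hε
    filter_upwards [htail0.eventually (gt_mem_nhds hε)] with l hl t ht
    rw [Real.dist_eq]
    exact lt_of_le_of_lt (hdist l t ht) hl
  have hgcont : ContinuousOn g (Set.Icc (0:ℝ) Tmax) :=
    hunif.continuousOn (Filter.Eventually.of_forall (f := (atTop : Filter ℕ)) fun l => (hcont l).continuousOn).frequently
  set zs : ℝ → ℝ := fun t => g ((Set.projIcc (0:ℝ) Tmax hT.le t : Set.Icc (0:ℝ) Tmax) : ℝ)
    with hzsdef
  have hzs_eq : ∀ t ∈ Set.Icc (0:ℝ) Tmax, zs t = g t := by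
    intro t ht
    rw [hzsdef]
    simp only
    rw [Set.projIcc_of_mem hT.le ht]
  have hzscont : Continuous zs := by
    refine hgcont.comp_continuous ?_ ?_
    · exact continuous_subtype_val.comp continuous_projIcc
    · intro t
      exact (Set.projIcc (0:ℝ) Tmax hT.le t).2
  have hunif_zs : TendstoUniformlyOn (fun l => zseq l) zs atTop (Set.Icc (0:ℝ) Tmax) := by
    rw [Metric.tendstoUniformlyOn_iff] at hunif ⊢
    intro ε hε
    filter_upwards [hunif ε hε] with l hl t ht
    rw [hzs_eq t ht]
    exact hl t ht
  have hzsdist : ∀ (l : ℕ), ∀ t ∈ Set.Icc (0:ℝ) Tmax, |zseq l t - zs t| ≤ tail l := by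
    intro l t ht
    rw [hzs_eq t ht, abs_sub_comm]
    exact hdist l t ht
  have hfix : ∀ t ∈ Set.Icc (0:ℝ) Tmax, zs t = Umap Td (Set.Icc Xmin Xmax) V F zs t := by
    intro t ht
    have h1 : Tendsto (fun l => zseq (l+1) t) atTop (nhds (zs t)) := by
      rw [hzs_eq t ht]
      exact (htendpt t ht).comp (tendsto_add_atTop_nat 1)
    have h2 : Tendsto (fun l => Umap Td (Set.Icc Xmin Xmax) V F (zseq l) t) atTop
        (nhds (Umap Td (Set.Icc Xmin Xmax) V F zs t)) := by
      rw [tendsto_iff_dist_tendsto_zero]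
      have hbd : ∀ l, dist (Umap Td (Set.Icc Xmin Xmax) V F (zseq l) t)
          (Umap Td (Set.Icc Xmin Xmax) V F zs t) ≤ tail l * (K * Tmax) := by
        intro l
        rw [Real.dist_eq]
        have hthis := PicardAux.umap_iter_bound hK0 hKey hIcont (hcont l) hzscont
          (htailnn l) 0 (fun τ hτ => by simpa using hzsdist l τ hτ) ht
        refine le_trans hthis ?_
        have h' : tail l * K ^ 1 * t ^ 1 / ((Nat.factorial 1 : ℕ) : ℝ) = tail l * (K * t) := by
          simp [Nat.factorial]
          ring
        rw [h']
        exact mul_le_mul_of_nonneg_left (mul_le_mul_of_nonneg_left ht.2 hK0) (htailnn l)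
      refine squeeze_zero (fun l => dist_nonneg) hbd ?_
      simpa using htail0.mul_const (K * Tmax)
    have h3 : Tendsto (fun l => zseq (l+1) t) atTop
        (nhds (Umap Td (Set.Icc Xmin Xmax) V F zs t)) := by
      refine h2.congr ?_
      intro l
      rw [hzseq l]
    exact tendsto_nhds_unique h1 h3
  have huniq : ∀ z' : ℝ → ℝ, Continuous z' →
      (∀ t ∈ Set.Icc (0:ℝ) Tmax, z' t = Umap Td (Set.Icc Xmin Xmax) V F z' t) →
      ∀ t ∈ Set.Icc (0:ℝ) Tmax, z' t = zs t := by
    intro z' hz'c hz'fix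
    obtain ⟨C2, hC2⟩ := (isCompact_Icc (a := (0:ℝ)) (b := Tmax)).exists_bound_of_continuousOn
      (hz'c.sub hzscont).continuousOn
    set C3 : ℝ := max C2 0 with hC3def
    have hC3nn : (0:ℝ) ≤ C3 := le_max_right _ _
    have hind : ∀ n : ℕ, ∀ t ∈ Set.Icc (0:ℝ) Tmax,
        |z' t - zs t| ≤ C3 * K ^ n * t ^ n / n.factorial := by
      intro n
      induction n with
      | zero =>
        intro t ht
        have : |z' t - zs t| ≤ C3 :=
          le_trans (le_trans (le_of_eq (Real.norm_eq_abs _).symm) (hC2 t ht)) (le_max_left _ _)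
        simpa using this
      | succ n ih =>
        intro t ht
        rw [hz'fix t ht, hfix t ht]
        exact PicardAux.umap_iter_bound hK0 hKey hIcont hz'c hzscont hC3nn n ih ht
    intro t ht
    have hlim : Tendsto (fun n : ℕ => C3 * K ^ n * t ^ n / n.factorial) atTop (nhds 0) := by
      have h := FloorSemiring.tendsto_pow_div_factorial_atTop (K := ℝ) (K * t)
      have h2 := h.const_mul C3
      rw [mul_zero] at h2
      refine h2.congr ?_
      intro n
      rw [mul_pow]
      ring
    have hle : |z' t - zs t| ≤ 0 := ge_of_tendsto' hlim (fun n => hind n t ht)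
    have h0 : z' t - zs t = 0 := abs_eq_zero.1 (le_antisymm hle (abs_nonneg _))
    linarith
  exact ⟨zs, hzscont, hfix, huniq, hunif_zs⟩
end
end

section
/- Suppose the speed function V is Lipschitz continuous. Let {F_k} ⊆ 𝒫_{m,G} with F_k ⇒ F weakly, and for each k let z*_k ∈ C(𝒯) be the unique solution of z(t) = ∫₀ᵗ V(F_k(S_s(z))) ds, and let z* be the unique solution of z(t) = ∫₀ᵗ V(F(S_s(z))) ds. Then z*_k → z* in the uniform norm on C(𝒯). In other words, the characteristic travel distance is continuous with respect to the in-flow measure when 𝒫_{m,G} carries the weak convergence topology and C(𝒯) the uniform topology. -/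
open MeasureTheory Set Filter

noncomputable section

/-- slicing bound -/
lemma aux_vol_slices {A : Set (ℝ × ℝ)} (hA : MeasurableSet A) {a b W : ℝ}
    (hW : 0 ≤ W) (_hab : a ≤ b)
    (hempty : ∀ τ : ℝ, τ ∉ Set.Icc a b → {ξ : ℝ | (τ, ξ) ∈ A} = ∅)
    (hsl : ∀ τ ∈ Set.Icc a b, volume {ξ : ℝ | (τ, ξ) ∈ A} ≤ ENNReal.ofReal W) :
    volume A ≤ ENNReal.ofReal ((b - a) * W) := by
  rw [show (volume : Measure (ℝ × ℝ)) = (volume : Measure ℝ).prod volume from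
    Measure.volume_eq_prod ℝ ℝ, Measure.prod_apply hA]
  calc ∫⁻ τ, volume (Prod.mk τ ⁻¹' A)
      ≤ ∫⁻ τ, (Set.Icc a b).indicator (fun _ => ENNReal.ofReal W) τ := by
        refine lintegral_mono fun τ => ?_
        by_cases hτ : τ ∈ Set.Icc a b
        · rw [Set.indicator_of_mem hτ]; exact hsl τ hτ
        · have : Prod.mk τ ⁻¹' A = ∅ := hempty τ hτ
          simp [hτ, this]
    _ = ENNReal.ofReal W * volume (Set.Icc a b) := lintegral_indicator_const measurableSet_Icc _
    _ ≤ ENNReal.ofReal ((b - a) * W) := by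
        rw [Real.volume_Icc, ← ENNReal.ofReal_mul hW, mul_comm]

lemma aux_symdiff_vol (Td : Set ℝ) {Xmin Xmax : ℝ} (hX : Xmin ≤ Xmax)
    {z w : ℝ → ℝ} (hz : Continuous z)
    {s' s W : ℝ} (hs' : 0 ≤ s') (hss : s' ≤ s) (hW : 0 ≤ W)
    (hb : ∀ τ ∈ Set.Icc 0 s', |(z s - z τ) - (w s' - w τ)| ≤ W) :
    volume ((Sset Td (Set.Icc Xmin Xmax) z s \ Sset Td (Set.Icc Xmin Xmax) w s') ∪
            (Sset Td (Set.Icc Xmin Xmax) w s' \ Sset Td (Set.Icc Xmin Xmax) z s))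
      ≤ ENNReal.ofReal ((s - s') * (Xmax - Xmin) + s' * (2 * W)) := by
  set A : Set (ℝ × ℝ) := Set.Ioc s' s ×ˢ Set.Icc Xmin Xmax with hA
  set B : Set (ℝ × ℝ) :=
    {p : ℝ × ℝ | p.1 ∈ Set.Icc 0 s' ∧ p.2 ∈ Set.Ioc (z s - z p.1 - W) (z s - z p.1 + W)} with hB
  have hsub : (Sset Td (Set.Icc Xmin Xmax) z s \ Sset Td (Set.Icc Xmin Xmax) w s') ∪
      (Sset Td (Set.Icc Xmin Xmax) w s' \ Sset Td (Set.Icc Xmin Xmax) z s) ⊆ A ∪ B := by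
    rintro p (⟨hp, hnp⟩ | ⟨hp, hnp⟩)
    · obtain ⟨⟨⟨h0, hs1⟩, hTd⟩, hIoi, hXX⟩ := hp
      by_cases hc : p.1 ≤ s'
      · right
        have hmem : p.1 ∈ Set.Icc 0 s' := ⟨h0, hc⟩
        have hle : p.2 ≤ w s' - w p.1 := by
          by_contra hlt
          exact hnp ⟨⟨hmem, hTd⟩, lt_of_not_ge hlt, hXX⟩
        have hbb := hb p.1 hmem
        have h1 : w s' - w p.1 ≤ (z s - z p.1) + W := by
          have := neg_abs_le ((z s - z p.1) - (w s' - w p.1)); linarith [hbb, abs_le.1 hbb]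
        refine ⟨hmem, ?_, le_trans hle h1⟩
        have : z s - z p.1 < p.2 := hIoi
        linarith
      · exact Or.inl ⟨⟨lt_of_not_ge hc, hs1⟩, hXX⟩
    · obtain ⟨⟨⟨h0, hs1⟩, hTd⟩, hIoi, hXX⟩ := hp
      right
      have hmem : p.1 ∈ Set.Icc 0 s' := ⟨h0, hs1⟩
      have hle : p.2 ≤ z s - z p.1 := by
        by_contra hlt
        exact hnp ⟨⟨⟨h0, le_trans hs1 hss⟩, hTd⟩, lt_of_not_ge hlt, hXX⟩
      have hbb := abs_le.1 (hb p.1 hmem)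
      have : w s' - w p.1 < p.2 := hIoi
      refine ⟨hmem, by linarith, by linarith⟩
  have hBm : MeasurableSet B := by
    have : B = ((fun p : ℝ × ℝ => p.1) ⁻¹' Set.Icc 0 s') ∩
        ({p : ℝ × ℝ | z s - z p.1 - W < p.2} ∩ {p : ℝ × ℝ | p.2 ≤ z s - z p.1 + W}) := by
      rfl
    rw [this]
    exact (measurable_fst measurableSet_Icc).inter
      ((measurableSet_lt (by fun_prop) measurable_snd).inter
        (measurableSet_le measurable_snd (by fun_prop)))
  have hvolA : volume A ≤ ENNReal.ofReal ((s - s') * (Xmax - Xmin)) := by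
    rw [hA, show (volume : Measure (ℝ × ℝ)) = (volume : Measure ℝ).prod volume from
      Measure.volume_eq_prod ℝ ℝ, Measure.prod_prod, Real.volume_Ioc, Real.volume_Icc,
      ← ENNReal.ofReal_mul (by linarith)]
  have hvolB : volume B ≤ ENNReal.ofReal (s' * (2 * W)) := by
    have := aux_vol_slices hBm (by linarith : (0:ℝ) ≤ 2 * W) hs'
      (fun τ hτ => by
        ext ξ
        simp only [hB, Set.mem_setOf_eq, Set.mem_empty_iff_false, iff_false, not_and]
        exact fun h _ => hτ h)
      (fun τ hτ => by
        have hss : {ξ : ℝ | (τ, ξ) ∈ B} ⊆ Set.Ioc (z s - z τ - W) (z s - z τ + W) := by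
          intro ξ hξ; exact hξ.2
        calc volume {ξ : ℝ | (τ, ξ) ∈ B} ≤ volume (Set.Ioc (z s - z τ - W) (z s - z τ + W)) :=
              measure_mono hss
          _ ≤ ENNReal.ofReal (2 * W) := by rw [Real.volume_Ioc]; apply ENNReal.ofReal_le_ofReal; ring_nf; linarith
        )
    simpa [sub_zero] using this
  calc volume _ ≤ volume (A ∪ B) := measure_mono hsub
    _ ≤ volume A + volume B := measure_union_le _ _
    _ ≤ ENNReal.ofReal ((s - s') * (Xmax - Xmin)) + ENNReal.ofReal (s' * (2 * W)) :=
        add_le_add hvolA hvolB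
    _ = ENNReal.ofReal ((s - s') * (Xmax - Xmin) + s' * (2 * W)) := by
        rw [← ENNReal.ofReal_add (by nlinarith) (by positivity)]

lemma Sset_measurable {Td : Set ℝ} (hTd : MeasurableSet Td) {Xs : Set ℝ} (hXs : MeasurableSet Xs)
    {z : ℝ → ℝ} (hz : Continuous z) (s : ℝ) :
    MeasurableSet (Sset Td Xs z s) := by
  have : Sset Td Xs z s = ((fun p : ℝ × ℝ => p.1) ⁻¹' (Set.Icc 0 s ∩ Td)) ∩
      ({p : ℝ × ℝ | z s - z p.1 < p.2} ∩ ((fun p : ℝ × ℝ => p.2) ⁻¹' Xs)) := rfl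
  rw [this]
  exact (measurable_fst (measurableSet_Icc.inter hTd)).inter
    ((measurableSet_lt (by fun_prop) measurable_snd).inter (measurable_snd hXs))

lemma aux_absdiff {G c : ℝ} (hG : 0 ≤ G) (hc : 0 ≤ c) {μ : Measure (ℝ × ℝ)}
    [IsProbabilityMeasure μ]
    (hd : ∀ B : Set (ℝ × ℝ), MeasurableSet B → μ B ≤ ENNReal.ofReal G * volume B)
    {P Q : Set (ℝ × ℝ)} (hP : MeasurableSet P) (hQ : MeasurableSet Q)
    (hvol : volume ((P \ Q) ∪ (Q \ P)) ≤ ENNReal.ofReal c) :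
    |(μ P).toReal - (μ Q).toReal| ≤ G * c := by
  have key : ∀ R S : Set (ℝ × ℝ), MeasurableSet R → MeasurableSet S →
      volume (R \ S) ≤ ENNReal.ofReal c → (μ R).toReal ≤ (μ S).toReal + G * c := by
    intro R S hR hS hv
    have h1 : μ R ≤ μ S + ENNReal.ofReal (G * c) := by
      calc μ R ≤ μ (S ∪ (R \ S)) := measure_mono (fun x hx => by
            by_cases h : x ∈ S
            · exact Or.inl h
            · exact Or.inr ⟨hx, h⟩)
        _ ≤ μ S + μ (R \ S) := measure_union_le _ _
        _ ≤ μ S + ENNReal.ofReal (G * c) := by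
            refine add_le_add_right ?_ _
            calc μ (R \ S) ≤ ENNReal.ofReal G * volume (R \ S) := hd _ (hR.diff hS)
              _ ≤ ENNReal.ofReal G * ENNReal.ofReal c := by
                  exact mul_le_mul_right hv _
              _ = ENNReal.ofReal (G * c) := (ENNReal.ofReal_mul hG).symm
    have h2 : (μ R).toReal ≤ (μ S + ENNReal.ofReal (G * c)).toReal :=
      ENNReal.toReal_mono (by finiteness) h1
    rwa [ENNReal.toReal_add (by finiteness) (by finiteness),
      ENNReal.toReal_ofReal (by positivity)] at h2
  have hv1 : volume (P \ Q) ≤ ENNReal.ofReal c :=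
    le_trans (measure_mono Set.subset_union_left) hvol
  have hv2 : volume (Q \ P) ≤ ENNReal.ofReal c :=
    le_trans (measure_mono Set.subset_union_right) hvol
  rw [abs_sub_le_iff]
  constructor
  · linarith [key P Q hP hQ hv1]
  · linarith [key Q P hQ hP hv2]

lemma aux_conc {μ : Measure (ℝ × ℝ)} {K : Set (ℝ × ℝ)} (h0 : μ Kᶜ = 0) (S : Set (ℝ × ℝ)) :
    μ S = μ (S ∩ K) := (measure_inter_conull h0).symm

lemma aux_Sset_inter (Td Xs : Set ℝ) (z : ℝ → ℝ) (s : ℝ) :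
    Sset Td Xs z s ∩ (Td ×ˢ Xs) =
      {p : ℝ × ℝ | p.1 ∈ Set.Icc 0 s ∧ z s - z p.1 < p.2} ∩ (Td ×ˢ Xs) := by
  ext p
  simp only [Sset, Set.mem_inter_iff, Set.mem_setOf_eq, Set.mem_prod, Set.mem_Ioi]
  tauto


lemma aux_vline_vol (c : ℝ) : volume {p : ℝ × ℝ | p.1 = c} = 0 := by
  have : {p : ℝ × ℝ | p.1 = c} = ({c} : Set ℝ) ×ˢ (Set.univ : Set ℝ) := by
    ext ⟨a, b⟩; simp [eq_comm]
  rw [this, show (volume : Measure (ℝ × ℝ)) = (volume : Measure ℝ).prod volume from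
    Measure.volume_eq_prod ℝ ℝ, Measure.prod_prod]
  simp

lemma aux_graph_vol {g : ℝ → ℝ} (hg : Continuous g) : volume {p : ℝ × ℝ | p.2 = g p.1} = 0 := by
  have hm : MeasurableSet {p : ℝ × ℝ | p.2 = g p.1} :=
    measurableSet_eq_fun measurable_snd (by fun_prop)
  rw [show (volume : Measure (ℝ × ℝ)) = (volume : Measure ℝ).prod volume from
    Measure.volume_eq_prod ℝ ℝ, Measure.prod_apply hm]
  have : ∀ τ : ℝ, volume (Prod.mk τ ⁻¹' {p : ℝ × ℝ | p.2 = g p.1}) = 0 := by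
    intro τ
    have : Prod.mk τ ⁻¹' {p : ℝ × ℝ | p.2 = g p.1} = {g τ} := by
      ext ξ; simp
    rw [this]; exact measure_singleton _
  simp [this]

lemma aux_frontier_subset {zs : ℝ → ℝ} (hzs : Continuous zs) (s : ℝ) :
    frontier {p : ℝ × ℝ | p.1 ∈ Set.Icc 0 s ∧ zs s - zs p.1 < p.2} ⊆
      {p : ℝ × ℝ | p.1 = 0} ∪ {p : ℝ × ℝ | p.1 = s} ∪ {p : ℝ × ℝ | p.2 = zs s - zs p.1} := by
  set E := {p : ℝ × ℝ | p.1 ∈ Set.Icc 0 s ∧ zs s - zs p.1 < p.2}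
  have hC : closure E ⊆ {p : ℝ × ℝ | 0 ≤ p.1 ∧ p.1 ≤ s ∧ zs s - zs p.1 ≤ p.2} := by
    apply closure_minimal
    · rintro p ⟨⟨h0, h1⟩, h2⟩; exact ⟨h0, h1, le_of_lt h2⟩
    · refine IsClosed.inter (isClosed_le continuous_const continuous_fst) ?_
      exact IsClosed.inter (isClosed_le continuous_fst continuous_const)
        (isClosed_le (by fun_prop) continuous_snd)
  have hU : {p : ℝ × ℝ | 0 < p.1 ∧ p.1 < s ∧ zs s - zs p.1 < p.2} ⊆ interior E := by
    apply interior_maximal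
    · rintro p ⟨h0, h1, h2⟩; exact ⟨⟨le_of_lt h0, le_of_lt h1⟩, h2⟩
    · refine IsOpen.inter (isOpen_lt continuous_const continuous_fst) ?_
      exact IsOpen.inter (isOpen_lt continuous_fst continuous_const)
        (isOpen_lt (by fun_prop) continuous_snd)
  intro p hp
  have hc := hC hp.1
  have hnu : p ∉ {p : ℝ × ℝ | 0 < p.1 ∧ p.1 < s ∧ zs s - zs p.1 < p.2} :=
    fun h => hp.2 (hU h)
  simp only [Set.mem_setOf_eq, not_and, not_lt] at hnu
  by_cases h0 : p.1 = 0
  · exact Or.inl (Or.inl h0)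
  · have h0' : 0 < p.1 := lt_of_le_of_ne hc.1 (Ne.symm h0)
    by_cases h1 : p.1 = s
    · exact Or.inl (Or.inr h1)
    · have h1' : p.1 < s := lt_of_le_of_ne hc.2.1 h1
      have := hnu h0' h1'
      exact Or.inr (le_antisymm this hc.2.2)

lemma aux_pointwise (Td Xs Ta : Set ℝ) (m : Measure (ℝ × ℝ)) (G : ℝ)
    (Fk : ℕ → ProbabilityMeasure (ℝ × ℝ)) (F : ProbabilityMeasure (ℝ × ℝ))
    (hFk : ∀ k, memP Td Xs Ta m G (Fk k : Measure (ℝ × ℝ)))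
    (hFmem : memP Td Xs Ta m G (F : Measure (ℝ × ℝ)))
    (hconv : Tendsto Fk atTop (nhds F))
    {zs : ℝ → ℝ} (hzs : Continuous zs) (s : ℝ) :
    Tendsto (fun k => ((Fk k : Measure (ℝ × ℝ)) (Sset Td Xs zs s)).toReal) atTop
      (nhds (((F : Measure (ℝ × ℝ)) (Sset Td Xs zs s)).toReal)) := by
  set E := {p : ℝ × ℝ | p.1 ∈ Set.Icc 0 s ∧ zs s - zs p.1 < p.2} with hE
  -- concentration: μ (Sset) = μ E for any memP μ
  have conc : ∀ μ : Measure (ℝ × ℝ), memP Td Xs Ta m G μ → μ (Sset Td Xs zs s) = μ E := by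
    intro μ hμ
    rw [aux_conc hμ.2.1 (Sset Td Xs zs s), aux_Sset_inter, ← aux_conc hμ.2.1 E]
  -- null frontier
  have hN : (F : Measure (ℝ × ℝ))
      ({p : ℝ × ℝ | p.1 = 0} ∪ {p : ℝ × ℝ | p.1 = s} ∪ {p : ℝ × ℝ | p.2 = zs s - zs p.1}) = 0 := by
    refine measure_union_null (measure_union_null ?_ ?_) ?_
    · have h := hFmem.2.2.1 {p : ℝ × ℝ | p.1 = 0}
        (measurable_fst (measurableSet_singleton (0:ℝ)))
      rw [aux_vline_vol 0, mul_zero] at h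
      exact le_zero_iff.1 h
    · have h := hFmem.2.2.1 {p : ℝ × ℝ | p.1 = s}
        (measurable_fst (measurableSet_singleton s))
      rw [aux_vline_vol s, mul_zero] at h
      exact le_zero_iff.1 h
    · have hm : MeasurableSet {p : ℝ × ℝ | p.2 = zs s - zs p.1} :=
        measurableSet_eq_fun measurable_snd (by fun_prop)
      have h := hFmem.2.2.1 _ hm
      rw [aux_graph_vol (g := fun τ => zs s - zs τ) (by fun_prop), mul_zero] at h
      exact le_zero_iff.1 h
  have hfront : (F : Measure (ℝ × ℝ)) (frontier E) = 0 :=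
    measure_mono_null (aux_frontier_subset hzs s) hN
  have hfrontNN : F (frontier E) = 0 := (F.null_iff_toMeasure_null (frontier E)).2 hfront
  have key := ProbabilityMeasure.tendsto_measure_of_null_frontier_of_tendsto hconv hfrontNN
  have key2 : Tendsto (fun k => ((Fk k) E : ℝ)) atTop (nhds ((F E : ℝ))) :=
    (NNReal.tendsto_coe).2 key
  have eq1 : ∀ k, ((Fk k : Measure (ℝ × ℝ)) (Sset Td Xs zs s)).toReal = ((Fk k) E : ℝ) := by
    intro k
    rw [conc _ (hFk k), ← ProbabilityMeasure.ennreal_coeFn_eq_coeFn_toMeasure,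
      ENNReal.coe_toReal]
  have eq2 : ((F : Measure (ℝ × ℝ)) (Sset Td Xs zs s)).toReal = ((F) E : ℝ) := by
    rw [conc _ hFmem, ← ProbabilityMeasure.ennreal_coeFn_eq_coeFn_toMeasure,
      ENNReal.coe_toReal]
  rw [eq2]
  simpa [eq1] using key2

section
variable {Td : Set ℝ} (hTd : MeasurableSet Td) {Xmin Xmax Tmax G : ℝ}
  (hX : Xmin ≤ Xmax) (hT : 0 ≤ Tmax) (hG : 0 ≤ G)
  {μ : Measure (ℝ × ℝ)} [IsProbabilityMeasure μ]
  (hd : ∀ B : Set (ℝ × ℝ), MeasurableSet B → μ B ≤ ENNReal.ofReal G * volume B)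

include hTd hX hT hG hd

/-- modulus of continuity in time -/
lemma aux_mod {z : ℝ → ℝ} (hz : Continuous z) {s' s : ℝ}
    (hs' : s' ∈ Set.Icc 0 Tmax) (hs : s ∈ Set.Icc 0 Tmax) :
    |(μ (Sset Td (Set.Icc Xmin Xmax) z s)).toReal -
        (μ (Sset Td (Set.Icc Xmin Xmax) z s')).toReal| ≤
      G * (|s - s'| * (Xmax - Xmin) + Tmax * (2 * |z s - z s'|)) := by
  have main : ∀ a b : ℝ, a ∈ Set.Icc 0 Tmax → b ∈ Set.Icc 0 Tmax → a ≤ b →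
      |(μ (Sset Td (Set.Icc Xmin Xmax) z b)).toReal -
        (μ (Sset Td (Set.Icc Xmin Xmax) z a)).toReal| ≤
      G * (|b - a| * (Xmax - Xmin) + Tmax * (2 * |z b - z a|)) := by
    intro a b ha hb hab
    have habs : |b - a| = b - a := abs_of_nonneg (by linarith)
    have hvol := aux_symdiff_vol Td hX hz ha.1 hab (abs_nonneg (z b - z a))
      (fun τ _ => by
        have : (z b - z τ) - (z a - z τ) = z b - z a := by ring
        rw [this])
    have hvol2 : volume ((Sset Td (Set.Icc Xmin Xmax) z b \ Sset Td (Set.Icc Xmin Xmax) z a) ∪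
            (Sset Td (Set.Icc Xmin Xmax) z a \ Sset Td (Set.Icc Xmin Xmax) z b))
        ≤ ENNReal.ofReal (|b - a| * (Xmax - Xmin) + Tmax * (2 * |z b - z a|)) := by
      refine le_trans hvol (ENNReal.ofReal_le_ofReal ?_)
      rw [habs]
      have h1 : a * (2 * |z b - z a|) ≤ Tmax * (2 * |z b - z a|) := by
        apply mul_le_mul_of_nonneg_right ha.2 (by positivity)
      linarith
    have hc0 : 0 ≤ |b - a| * (Xmax - Xmin) + Tmax * (2 * |z b - z a|) := by
      have h1 : 0 ≤ |b - a| * (Xmax - Xmin) := mul_nonneg (abs_nonneg _) (by linarith)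
      have h2 : 0 ≤ Tmax * (2 * |z b - z a|) := mul_nonneg hT (by positivity)
      linarith
    exact aux_absdiff hG hc0 hd
      (Sset_measurable hTd measurableSet_Icc hz b)
      (Sset_measurable hTd measurableSet_Icc hz a) hvol2
  rcases le_total s' s with h | h
  · exact main s' s hs' hs h
  · have h2 := main s s' hs hs' h
    rw [abs_sub_comm ((μ (Sset Td (Set.Icc Xmin Xmax) z s)).toReal),
      abs_sub_comm s s', abs_sub_comm (z s) (z s')]
    exact h2

/-- contraction estimate in `z` -/
lemma aux_zdiff {z w : ℝ → ℝ} (hz : Continuous z) (hw : Continuous w) {s W : ℝ}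
    (hs : s ∈ Set.Icc 0 Tmax) (hW : 0 ≤ W)
    (hb : ∀ τ ∈ Set.Icc 0 s, |(z s - z τ) - (w s - w τ)| ≤ W) :
    |(μ (Sset Td (Set.Icc Xmin Xmax) z s)).toReal -
        (μ (Sset Td (Set.Icc Xmin Xmax) w s)).toReal| ≤
      G * (Tmax * (2 * W)) := by
  have hvol := aux_symdiff_vol Td hX hz hs.1 le_rfl hW hb
  have hvol2 : volume ((Sset Td (Set.Icc Xmin Xmax) z s \ Sset Td (Set.Icc Xmin Xmax) w s) ∪
          (Sset Td (Set.Icc Xmin Xmax) w s \ Sset Td (Set.Icc Xmin Xmax) z s))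
      ≤ ENNReal.ofReal (Tmax * (2 * W)) := by
    refine le_trans hvol (ENNReal.ofReal_le_ofReal ?_)
    have h1 : s * (2 * W) ≤ Tmax * (2 * W) := by
      apply mul_le_mul_of_nonneg_right hs.2 (by positivity)
    have : (s - s) * (Xmax - Xmin) = 0 := by ring
    linarith
  exact aux_absdiff hG (by positivity) hd
    (Sset_measurable hTd measurableSet_Icc hz s)
    (Sset_measurable hTd measurableSet_Icc hw s) hvol2

/-- continuity in time -/
lemma aux_cont {z : ℝ → ℝ} (hz : Continuous z) :
    ContinuousOn (fun s => (μ (Sset Td (Set.Icc Xmin Xmax) z s)).toReal)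
      (Set.Icc 0 Tmax) := by
  intro s₀ hs₀
  have hB : Tendsto (fun s => G * (|s - s₀| * (Xmax - Xmin) + Tmax * (2 * |z s - z s₀|)))
      (nhdsWithin s₀ (Set.Icc 0 Tmax)) (nhds 0) := by
    have : Continuous (fun s => G * (|s - s₀| * (Xmax - Xmin) + Tmax * (2 * |z s - z s₀|))) := by
      fun_prop
    have h0 := (this.tendsto s₀).mono_left
      (nhdsWithin_le_nhds : nhdsWithin s₀ (Set.Icc 0 Tmax) ≤ nhds s₀)
    simpa using h0
  rw [ContinuousWithinAt, tendsto_iff_dist_tendsto_zero]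
  refine squeeze_zero' (Filter.Eventually.of_forall (fun s => dist_nonneg)) ?_ hB
  filter_upwards [self_mem_nhdsWithin] with s hsmem
  rw [Real.dist_eq]
  exact aux_mod hTd hX hT hG hd hz hs₀ hsmem
end

lemma aux_unif {Tmax Xmin Xmax G : ℝ} (hT : 0 < Tmax) (hXX : Xmin < Xmax) (hG : 0 < G)
    {Td Ta : Set ℝ} (hTdm : MeasurableSet Td)
    {m : Measure (ℝ × ℝ)}
    {Fk : ℕ → ProbabilityMeasure (ℝ × ℝ)} {F : ProbabilityMeasure (ℝ × ℝ)}
    (hFk : ∀ k, memP Td (Set.Icc Xmin Xmax) Ta m G (Fk k : Measure (ℝ × ℝ)))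
    (hFmem : memP Td (Set.Icc Xmin Xmax) Ta m G (F : Measure (ℝ × ℝ)))
    (hconv : Tendsto Fk atTop (nhds F))
    {zs : ℝ → ℝ} (hzs : Continuous zs)
    {η : ℝ} (hη : 0 < η) :
    ∀ᶠ k in atTop, ∀ s ∈ Set.Icc (0:ℝ) Tmax,
      |((Fk k : Measure (ℝ × ℝ)) (Sset Td (Set.Icc Xmin Xmax) zs s)).toReal -
        ((F : Measure (ℝ × ℝ)) (Sset Td (Set.Icc Xmin Xmax) zs s)).toReal| ≤ η := by
  set X := Set.Icc Xmin Xmax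
  set hks : ℕ → ℝ → ℝ := fun k s => ((Fk k : Measure (ℝ × ℝ)) (Sset Td X zs s)).toReal with hhks
  set hsf : ℝ → ℝ := fun s => ((F : Measure (ℝ × ℝ)) (Sset Td X zs s)).toReal with hhsf
  have hX : Xmin ≤ Xmax := le_of_lt hXX
  have hT' : (0:ℝ) ≤ Tmax := le_of_lt hT
  have hG' : (0:ℝ) ≤ G := le_of_lt hG
  set εz : ℝ := η / (12 * (G * Tmax) + 12) with hεz
  set δ₂ : ℝ := η / (6 * (G * (Xmax - Xmin)) + 6) with hδ₂
  have hεzpos : 0 < εz := by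
    apply div_pos hη; positivity
  have hδ₂pos : 0 < δ₂ := by
    apply div_pos hη; nlinarith
  -- the modulus bound implies η/3 closeness
  have calc_bound : ∀ d ω : ℝ, 0 ≤ d → d ≤ δ₂ → 0 ≤ ω → ω ≤ εz →
      G * (d * (Xmax - Xmin) + Tmax * (2 * ω)) ≤ η / 3 := by
    intro d ω hd hdδ hω hωε
    set A := G * (Xmax - Xmin) with hA
    set B := G * Tmax with hB
    have hA0 : 0 ≤ A := by rw [hA]; nlinarith
    have hB0 : 0 ≤ B := by positivity
    have h1 : G * (d * (Xmax - Xmin)) ≤ A * δ₂ := by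
      rw [hA]; nlinarith
    have h2 : G * (Tmax * (2 * ω)) ≤ B * (2 * εz) := by
      rw [hB]; nlinarith
    have h3 : A * δ₂ ≤ η / 6 := by
      rw [hδ₂, ← mul_div_assoc, div_le_div_iff₀ (by linarith) (by norm_num)]
      nlinarith
    have h4 : B * (2 * εz) ≤ η / 6 := by
      rw [hεz]
      rw [show B * (2 * (η / (12 * (G * Tmax) + 12))) = (2 * B) * (η / (12 * B + 12)) by
        rw [hB]; ring]
      rw [← mul_div_assoc, div_le_div_iff₀ (by linarith) (by norm_num)]
      nlinarith
    nlinarith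
  -- uniform continuity of zs
  have huc : UniformContinuousOn zs (Set.Icc 0 Tmax) :=
    (isCompact_Icc).uniformContinuousOn_of_continuous hzs.continuousOn
  rw [Metric.uniformContinuousOn_iff] at huc
  obtain ⟨δ₁, hδ₁pos, hδ₁⟩ := huc εz hεzpos
  set δ : ℝ := min δ₁ δ₂ with hδ
  have hδpos : 0 < δ := lt_min hδ₁pos hδ₂pos
  -- finite subcover
  obtain ⟨t, ht⟩ := (isCompact_Icc : IsCompact (Set.Icc (0:ℝ) Tmax)).elim_finite_subcover
    (fun i : ↥(Set.Icc (0:ℝ) Tmax) => Metric.ball i.1 δ)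
    (fun i => Metric.isOpen_ball)
    (fun x hx => Set.mem_iUnion.2 ⟨⟨x, hx⟩, Metric.mem_ball_self hδpos⟩)
  -- eventual closeness at the centers
  have hev : ∀ᶠ k in atTop, ∀ i ∈ (t : Set ↥(Set.Icc (0:ℝ) Tmax)),
      dist (hks k i.1) (hsf i.1) < η / 3 := by
    refine (eventually_all_finite t.finite_toSet).2 (fun i _ => ?_)
    exact (aux_pointwise Td X Ta m G Fk F hFk hFmem hconv hzs i.1).eventually
      (Metric.ball_mem_nhds _ (by positivity))
  filter_upwards [hev] with k hk s hsmem
  have hcov := ht hsmem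
  rw [Set.mem_iUnion₂] at hcov
  obtain ⟨i, hit, hball⟩ := hcov
  have hdist : |s - i.1| < δ := by
    rw [← Real.dist_eq]; exact hball
  have hd1 : |s - i.1| ≤ δ₂ := le_trans (le_of_lt hdist) (min_le_right _ _)
  have hzdist : |zs s - zs i.1| ≤ εz := by
    rw [← Real.dist_eq]
    exact le_of_lt (hδ₁ s hsmem i.1 i.2 (lt_of_lt_of_le (by rw [Real.dist_eq]; exact hdist)
      (min_le_left _ _)))
  have hmb := calc_bound |s - i.1| |zs s - zs i.1| (abs_nonneg _) hd1 (abs_nonneg _) hzdist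
  have p1 : |hks k s - hks k i.1| ≤ η / 3 :=
    le_trans (aux_mod hTdm hX hT' hG' (hFk k).2.2.1 hzs i.2 hsmem) hmb
  have p3' : |hsf s - hsf i.1| ≤ η / 3 :=
    le_trans (aux_mod hTdm hX hT' hG' hFmem.2.2.1 hzs i.2 hsmem) hmb
  have p2 : |hks k i.1 - hsf i.1| < η / 3 := by
    rw [← Real.dist_eq]; exact hk i hit
  calc |hks k s - hsf s|
      ≤ |hks k s - hks k i.1| + |hks k i.1 - hsf s| := abs_sub_le _ _ _
    _ ≤ |hks k s - hks k i.1| + (|hks k i.1 - hsf i.1| + |hsf i.1 - hsf s|) :=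
        add_le_add_right (abs_sub_le _ _ _) _
    _ ≤ η / 3 + (η / 3 + η / 3) := by
        rw [abs_sub_comm (hsf i.1) (hsf s)]
        exact add_le_add p1 (add_le_add (le_of_lt p2) p3')
    _ = η := by ring

lemma aux_key {Tmax Xmin Xmax G : ℝ} (hT : 0 < Tmax) (hXX : Xmin < Xmax) (hG : 0 < G)
    {Td : Set ℝ} (hTdm : MeasurableSet Td)
    (V : ℝ → ℝ) (LV : NNReal) (hV : LipschitzOnWith LV V (Set.Ici 0))
    {μk μ : Measure (ℝ × ℝ)} [IsProbabilityMeasure μk] [IsProbabilityMeasure μ]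
    (hdk : ∀ B : Set (ℝ × ℝ), MeasurableSet B → μk B ≤ ENNReal.ofReal G * volume B)
    (hd : ∀ B : Set (ℝ × ℝ), MeasurableSet B → μ B ≤ ENNReal.ofReal G * volume B)
    {zkf zs : ℝ → ℝ} (hzk : Continuous zkf) (hzs : Continuous zs)
    (hzkfix : ∀ t ∈ Set.Icc (0:ℝ) Tmax, zkf t = Umap Td (Set.Icc Xmin Xmax) V μk zkf t)
    (hzsfix : ∀ t ∈ Set.Icc (0:ℝ) Tmax, zs t = Umap Td (Set.Icc Xmin Xmax) V μ zs t)
    {ε' : ℝ} (hε' : 0 ≤ ε')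
    (hεb : ∀ s ∈ Set.Icc (0:ℝ) Tmax,
      |(μk (Sset Td (Set.Icc Xmin Xmax) zs s)).toReal -
        (μ (Sset Td (Set.Icc Xmin Xmax) zs s)).toReal| ≤ ε') :
    ∀ t ∈ Set.Icc (0:ℝ) Tmax, |zkf t - zs t| ≤
      Real.exp ((8 * LV * G * Tmax + 1) * Tmax) * (2 * LV * Tmax * ε') := by
  set X := Set.Icc Xmin Xmax with hXdef
  have hX : Xmin ≤ Xmax := le_of_lt hXX
  have hT' : (0:ℝ) ≤ Tmax := le_of_lt hT
  have hG' : (0:ℝ) ≤ G := le_of_lt hG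
  have hLV0 : (0:ℝ) ≤ LV := LV.coe_nonneg
  set M : ℝ := 8 * LV * G * Tmax + 1 with hM
  have hM1 : (1:ℝ) ≤ M := by
    have h8 : (0:ℝ) ≤ 8 * LV * G * Tmax := by positivity
    rw [hM]; linarith
  have hM0 : (0:ℝ) < M := by linarith
  have hMne : M ≠ 0 := ne_of_gt hM0
  set φw : ℝ → ℝ := fun t => Real.exp (-(M * t)) * |zkf t - zs t| with hφw
  have hφwc : Continuous φw := by
    apply Continuous.mul
    · fun_prop
    · exact (hzk.sub hzs).abs
  obtain ⟨t₀, ht₀mem, ht₀max⟩ := isCompact_Icc.exists_isMaxOn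
    (Set.nonempty_Icc.2 hT') hφwc.continuousOn
  rw [isMaxOn_iff] at ht₀max
  set d : ℝ := φw t₀ with hdd
  have hd0 : 0 ≤ d := mul_nonneg (Real.exp_nonneg _) (abs_nonneg _)
  have hdb : ∀ τ ∈ Set.Icc (0:ℝ) Tmax, |zkf τ - zs τ| ≤ Real.exp (M * τ) * d := by
    intro τ hτ
    have h := ht₀max τ hτ
    calc |zkf τ - zs τ| = Real.exp (M * τ) * (Real.exp (-(M * τ)) * |zkf τ - zs τ|) := by
          rw [← mul_assoc, ← Real.exp_add, add_neg_cancel, Real.exp_zero, one_mul]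
      _ ≤ Real.exp (M * τ) * d := mul_le_mul_of_nonneg_left h (Real.exp_nonneg _)
  -- function abbreviations
  set hkf : ℝ → ℝ := fun s => (μk (Sset Td X zkf s)).toReal with hhkf
  set hkzs : ℝ → ℝ := fun s => (μk (Sset Td X zs s)).toReal with hhkzs
  set hsf : ℝ → ℝ := fun s => (μ (Sset Td X zs s)).toReal with hhsf
  have lip : ∀ a b : ℝ, 0 ≤ a → 0 ≤ b → |V a - V b| ≤ LV * |a - b| := by
    intro a b ha hb
    have := hV.dist_le_mul a ha b hb
    rwa [Real.dist_eq, Real.dist_eq] at this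
  have cVk : ContinuousOn (fun s => V (hkf s)) (Set.Icc 0 Tmax) := by
    refine hV.continuousOn.comp (aux_cont hTdm hX hT' hG' hdk hzk) ?_
    exact fun s _ => Set.mem_Ici.2 ENNReal.toReal_nonneg
  have cVs : ContinuousOn (fun s => V (hsf s)) (Set.Icc 0 Tmax) := by
    refine hV.continuousOn.comp (aux_cont hTdm hX hT' hG' hd hzs) ?_
    exact fun s _ => Set.mem_Ici.2 ENNReal.toReal_nonneg
  set c1 : ℝ := 4 * LV * G * Tmax * d with hc1
  set c2 : ℝ := LV * ε' with hc2
  have hc10 : 0 ≤ c1 := by positivity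
  have hc20 : 0 ≤ c2 := by positivity
  -- key estimate
  have KEY : ∀ t ∈ Set.Icc (0:ℝ) Tmax, φw t ≤ d / 2 + LV * Tmax * ε' := by
    intro t ht
    have hsub : Set.Icc (0:ℝ) t ⊆ Set.Icc (0:ℝ) Tmax := Set.Icc_subset_Icc le_rfl ht.2
    have huIcc : Set.uIcc (0:ℝ) t = Set.Icc 0 t := Set.uIcc_of_le ht.1
    have intk : IntervalIntegrable (fun s => V (hkf s)) volume 0 t := by
      apply ContinuousOn.intervalIntegrable; rw [huIcc]; exact cVk.mono hsub
    have ints : IntervalIntegrable (fun s => V (hsf s)) volume 0 t := by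
      apply ContinuousOn.intervalIntegrable; rw [huIcc]; exact cVs.mono hsub
    have heq : zkf t - zs t = ∫ s in (0:ℝ)..t, (V (hkf s) - V (hsf s)) := by
      rw [hzkfix t ht, hzsfix t ht]
      simp only [Umap]
      exact (intervalIntegral.integral_sub intk ints).symm
    -- pointwise bound
    have pb : ∀ s ∈ Set.Icc (0:ℝ) t, |V (hkf s) - V (hsf s)| ≤ c1 * Real.exp (M * s) + c2 := by
      intro s hsm
      have hsm' : s ∈ Set.Icc (0:ℝ) Tmax := hsub hsm
      set W : ℝ := 2 * Real.exp (M * s) * d with hW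
      have hW0 : 0 ≤ W := by positivity
      have hb : ∀ τ ∈ Set.Icc (0:ℝ) s, |(zkf s - zkf τ) - (zs s - zs τ)| ≤ W := by
        intro τ hτ
        have hτ' : τ ∈ Set.Icc (0:ℝ) Tmax := ⟨hτ.1, le_trans hτ.2 hsm'.2⟩
        have e1 : (zkf s - zkf τ) - (zs s - zs τ) = (zkf s - zs s) - (zkf τ - zs τ) := by ring
        have e2 : |(zkf s - zs s) - (zkf τ - zs τ)| ≤ |zkf s - zs s| + |zkf τ - zs τ| := by
          rw [sub_eq_add_neg]
          refine le_trans (abs_add_le _ _) ?_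
          rw [abs_neg]
        have e3 : |zkf s - zs s| ≤ Real.exp (M * s) * d := hdb s hsm'
        have e4 : |zkf τ - zs τ| ≤ Real.exp (M * τ) * d := hdb τ hτ'
        have e5 : Real.exp (M * τ) ≤ Real.exp (M * s) :=
          Real.exp_le_exp.2 (mul_le_mul_of_nonneg_left hτ.2 (le_of_lt hM0))
        have e6 : Real.exp (M * τ) * d ≤ Real.exp (M * s) * d :=
          mul_le_mul_of_nonneg_right e5 hd0
        rw [e1, hW]
        calc |(zkf s - zs s) - (zkf τ - zs τ)| ≤ |zkf s - zs s| + |zkf τ - zs τ| := e2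
          _ ≤ Real.exp (M * s) * d + Real.exp (M * s) * d := add_le_add e3 (le_trans e4 e6)
          _ = 2 * Real.exp (M * s) * d := by ring
      have hzd : |hkf s - hkzs s| ≤ G * (Tmax * (2 * W)) :=
        aux_zdiff hTdm hX hT' hG' hdk hzk hzs hsm' hW0 hb
      have hεd : |hkzs s - hsf s| ≤ ε' := hεb s hsm'
      have l1 : |V (hkf s) - V (hkzs s)| ≤ LV * (G * (Tmax * (2 * W))) := by
        refine le_trans (lip _ _ ENNReal.toReal_nonneg ENNReal.toReal_nonneg) ?_
        exact mul_le_mul_of_nonneg_left hzd hLV0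
      have l2 : |V (hkzs s) - V (hsf s)| ≤ LV * ε' := by
        refine le_trans (lip _ _ ENNReal.toReal_nonneg ENNReal.toReal_nonneg) ?_
        exact mul_le_mul_of_nonneg_left hεd hLV0
      have tri : |V (hkf s) - V (hsf s)| ≤
          |V (hkf s) - V (hkzs s)| + |V (hkzs s) - V (hsf s)| := abs_sub_le _ _ _
      have hrw : (LV:ℝ) * (G * (Tmax * (2 * W))) = c1 * Real.exp (M * s) := by
        rw [hc1, hW]; ring
      calc |V (hkf s) - V (hsf s)| ≤ LV * (G * (Tmax * (2 * W))) + LV * ε' := by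
            refine le_trans tri (add_le_add l1 l2)
        _ = c1 * Real.exp (M * s) + c2 := by rw [hrw, hc2]
    -- integral computation
    have habs_int : IntervalIntegrable (fun s => |V (hkf s) - V (hsf s)|) volume 0 t := by
      apply ContinuousOn.intervalIntegrable; rw [huIcc]
      exact ((cVk.mono hsub).sub (cVs.mono hsub)).abs
    have hrhs_int : IntervalIntegrable (fun s => c1 * Real.exp (M * s) + c2) volume 0 t := by
      apply Continuous.intervalIntegrable; fun_prop
    have hcomp : (∫ s in (0:ℝ)..t, (c1 * Real.exp (M * s) + c2))
        = c1 * (M⁻¹ * (Real.exp (M * t) - 1)) + c2 * t := by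
      rw [intervalIntegral.integral_add (by apply Continuous.intervalIntegrable; fun_prop)
        (intervalIntegrable_const)]
      rw [intervalIntegral.integral_const_mul]
      rw [intervalIntegral.integral_comp_mul_left Real.exp hMne]
      rw [intervalIntegral.integral_const]
      rw [mul_zero, integral_exp, Real.exp_zero]
      simp [smul_eq_mul]
      ring
    have hchain : |zkf t - zs t| ≤ c1 * (M⁻¹ * (Real.exp (M * t) - 1)) + c2 * t := by
      rw [heq]
      calc |∫ s in (0:ℝ)..t, (V (hkf s) - V (hsf s))|
          ≤ ∫ s in (0:ℝ)..t, |V (hkf s) - V (hsf s)| :=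
            intervalIntegral.abs_integral_le_integral_abs ht.1
        _ ≤ ∫ s in (0:ℝ)..t, (c1 * Real.exp (M * s) + c2) := by
            apply intervalIntegral.integral_mono_on ht.1 habs_int hrhs_int
            exact pb
        _ = _ := hcomp
    -- multiply by the weight and estimate
    have hw1 : Real.exp (-(M * t)) * (Real.exp (M * t) - 1) = 1 - Real.exp (-(M * t)) := by
      rw [mul_sub, ← Real.exp_add, neg_add_cancel, Real.exp_zero, mul_one]
    have hexple1 : Real.exp (-(M * t)) ≤ 1 := by
      rw [Real.exp_le_one_iff]
      have := mul_nonneg (le_of_lt hM0) ht.1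
      linarith
    have hexppos : 0 < Real.exp (-(M * t)) := Real.exp_pos _
    have h1 : Real.exp (-(M * t)) * (c1 * (M⁻¹ * (Real.exp (M * t) - 1))) ≤ c1 * M⁻¹ := by
      have e : Real.exp (-(M * t)) * (c1 * (M⁻¹ * (Real.exp (M * t) - 1)))
          = c1 * M⁻¹ * (Real.exp (-(M * t)) * (Real.exp (M * t) - 1)) := by ring
      rw [e, hw1]
      have hcm : 0 ≤ c1 * M⁻¹ := by positivity
      nlinarith
    have h2 : Real.exp (-(M * t)) * (c2 * t) ≤ c2 * Tmax := by
      have h2a : Real.exp (-(M * t)) * (c2 * t) ≤ 1 * (c2 * t) :=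
        mul_le_mul_of_nonneg_right hexple1 (mul_nonneg hc20 ht.1)
      have h2b : c2 * t ≤ c2 * Tmax := mul_le_mul_of_nonneg_left ht.2 hc20
      linarith
    have h3 : c1 * M⁻¹ ≤ d / 2 := by
      rw [← div_eq_mul_inv, div_le_iff₀ hM0]
      rw [hc1, hM]
      nlinarith
    calc φw t = Real.exp (-(M * t)) * |zkf t - zs t| := rfl
      _ ≤ Real.exp (-(M * t)) * (c1 * (M⁻¹ * (Real.exp (M * t) - 1)) + c2 * t) :=
          mul_le_mul_of_nonneg_left hchain (le_of_lt hexppos)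
      _ = Real.exp (-(M * t)) * (c1 * (M⁻¹ * (Real.exp (M * t) - 1)))
          + Real.exp (-(M * t)) * (c2 * t) := by ring
      _ ≤ d / 2 + c2 * Tmax := add_le_add (le_trans h1 h3) h2
      _ = d / 2 + LV * Tmax * ε' := by rw [hc2]; ring
  -- conclude
  have hdle : d ≤ 2 * LV * Tmax * ε' := by
    have := KEY t₀ ht₀mem
    rw [← hdd] at this
    linarith
  intro t ht
  calc |zkf t - zs t| ≤ Real.exp (M * t) * d := hdb t ht
    _ ≤ Real.exp (M * Tmax) * (2 * LV * Tmax * ε') := by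
        have e5 : Real.exp (M * t) ≤ Real.exp (M * Tmax) :=
          Real.exp_le_exp.2 (mul_le_mul_of_nonneg_left ht.2 (le_of_lt hM0))
        have expn : (0:ℝ) ≤ Real.exp (M * t) := Real.exp_nonneg _
        nlinarith [Real.exp_nonneg (M * Tmax)]
    _ = Real.exp ((8 * LV * G * Tmax + 1) * Tmax) * (2 * LV * Tmax * ε') := by rw [hM]

/-- Proposition 4: continuity of the characteristic travel distance
with respect to the in-flow measure. If `V` is Lipschitz, `F_k ∈ 𝒫_{m,G}` converge
weakly to `F ∈ 𝒫_{m,G}`, and `z*_k, z*` are the corresponding characteristic travel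
distances, then `z*_k → z*` uniformly on `𝒯`. -/
theorem characteristic_travel_distance_continuous_in_F
    (Tmax Xmin Xmax G : ℝ) (hT : 0 < Tmax) (hXmin : 0 < Xmin) (hXX : Xmin < Xmax)
    (hG : 0 < G)
    (Td Ta : Set ℝ) (hTdc : IsCompact Td) (hTd : Td ⊆ Set.Icc 0 Tmax)
    (hTac : IsCompact Ta) (hTa : Ta ⊆ Set.Icc 0 Tmax)
    (m : Measure (ℝ × ℝ)) (hm : IsProbabilityMeasure m)
    (V : ℝ → ℝ) (LV : NNReal) (hV : LipschitzOnWith LV V (Set.Ici 0))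
    (hVpos : ∀ c : ℝ, 0 ≤ c → 0 < V c)
    (Fk : ℕ → ProbabilityMeasure (ℝ × ℝ)) (F : ProbabilityMeasure (ℝ × ℝ))
    (hFk : ∀ k, memP Td (Set.Icc Xmin Xmax) Ta m G (Fk k : Measure (ℝ × ℝ)))
    (hFmem : memP Td (Set.Icc Xmin Xmax) Ta m G (F : Measure (ℝ × ℝ)))
    (hconv : Filter.Tendsto Fk Filter.atTop (nhds F))
    (zk : ℕ → ℝ → ℝ) (zs : ℝ → ℝ)
    (hzk : ∀ k, Continuous (zk k))
    (hzkfix : ∀ k, ∀ t ∈ Set.Icc (0:ℝ) Tmax,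
      zk k t = Umap Td (Set.Icc Xmin Xmax) V (Fk k : Measure (ℝ × ℝ)) (zk k) t)
    (hzs : Continuous zs)
    (hzsfix : ∀ t ∈ Set.Icc (0:ℝ) Tmax,
      zs t = Umap Td (Set.Icc Xmin Xmax) V (F : Measure (ℝ × ℝ)) zs t) :
    TendstoUniformlyOn (fun k => zk k) zs Filter.atTop (Set.Icc (0:ℝ) Tmax) := by
  have hXle : Xmin ≤ Xmax := le_of_lt hXX
  have hTdm : MeasurableSet Td := hTdc.isClosed.measurableSet
  rw [Metric.tendstoUniformlyOn_iff]
  intro ε hε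
  set C : ℝ := Real.exp ((8 * LV * G * Tmax + 1) * Tmax) * (2 * LV * Tmax) with hC
  have hC0 : 0 ≤ C := by positivity
  set ε' : ℝ := ε / (2 * (C + 1)) with hε'def
  have hε'pos : 0 < ε' := by apply div_pos hε; linarith
  have hev := aux_unif hT hXX hG hTdm hFk hFmem hconv hzs hε'pos
  filter_upwards [hev] with k hk t ht
  have hb := aux_key hT hXX hG hTdm V LV hV (hFk k).2.2.1 hFmem.2.2.1 (hzk k) hzs
    (hzkfix k) hzsfix (le_of_lt hε'pos) hk t ht
  calc dist (zs t) (zk k t) = |zk k t - zs t| := by rw [Real.dist_eq, abs_sub_comm]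
    _ ≤ Real.exp ((8 * LV * G * Tmax + 1) * Tmax) * (2 * LV * Tmax * ε') := hb
    _ = C * ε' := by rw [hC]; ring
    _ < ε := by
        rw [hε'def, ← mul_div_assoc, div_lt_iff₀ (by linarith : (0:ℝ) < 2 * (C + 1))]
        nlinarith
end
end
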